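/- arXiv:1707.08510 — 5 statements merged into one kernel-verified Lean document; each statement's English description precedes it below -/
import Mathlib

section
/- There exists a constant c_A > 0 such that the open set A := {x ∈ ℝ : |(log ρ)''(x)| < ((log ρ)'(x))² and 1/c_A < |(log ρ)'(x)| < c_A} satisfies ρ(A) > 0. -/
open MeasureTheory ProbabilityTheory Filter Set

noncomputable section

/-- The exponentially-weighted sup-norm `‖g‖_{∞,s} = sup_x e^{-s|x|} |g x|`. -/
def normIS (g : ℝ → ℝ) (s : ℝ) : ℝ := ⨆ x : ℝ, Real.exp (-(s * |x|)) * |g x|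

/-- Membership in the space `Sⁿ`: `n`-times continuously differentiable with all
iterated derivatives up to order `n` of sub-exponential growth. -/
def MemS (n : ℕ) (g : ℝ → ℝ) : Prop :=
  ContDiff ℝ n g ∧ ∀ s > (0:ℝ), ∀ i ≤ n,
    BddAbove (Set.range fun x => Real.exp (-(s * |x|)) * |iteratedDeriv i g x|)

/-- A positive sequence is sluggish if it tends to infinity but `a d / √(log d)` stays bounded. -/
def Sluggish (a : ℕ → ℝ) : Prop :=
  (∀ d, 0 < a d) ∧ Tendsto a atTop atTop ∧
    ∃ M : ℝ, ∀ d : ℕ, 2 ≤ d → a d / Real.sqrt (Real.log d) ≤ M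

/-- `(log ρ)'` -/
def dl (ρ : ℝ → ℝ) : ℝ → ℝ := deriv fun x => Real.log (ρ x)

/-- `(log ρ)''` -/
def d2l (ρ : ℝ → ℝ) : ℝ → ℝ := deriv (dl ρ)

/-- `ρ(g) = ∫ g dρ` -/
def rhoE (ρ g : ℝ → ℝ) : ℝ := ∫ x, g x * ρ x

/-- `J = ρ(((log ρ)')²)` -/
def Jc (ρ : ℝ → ℝ) : ℝ := rhoE ρ fun x => (dl ρ x) ^ 2

/-- super-exponential tails: `(x/|x|)·(log ρ)'(x) → -∞` as `|x| → ∞`. -/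
def SuperExpTails (ρ : ℝ → ℝ) : Prop :=
  Tendsto (dl ρ) atTop atBot ∧ Tendsto (dl ρ) atBot atTop

/-- standard normal CDF -/
def stdCDF (t : ℝ) : ℝ := ((gaussianReal 0 1) (Set.Iic t)).toReal

/-- the constant `h(l) = 2l²Φ(-l√J/2)` -/
def hc (ρ : ℝ → ℝ) (l : ℝ) : ℝ := 2 * l ^ 2 * stdCDF (-(l * Real.sqrt (Jc ρ)) / 2)

/-- the limiting (Langevin) generator `G f = (h(l)/2)(f'' + (log ρ)' f')` -/
def Gop (ρ : ℝ → ℝ) (l : ℝ) (f : ℝ → ℝ) (x : ℝ) : ℝ :=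
  hc ρ l / 2 * (deriv (deriv f) x + dl ρ x * deriv f x)

/-- the product measure `ρ_d` on `ℝ^d` -/
def pm (ρ : ℝ → ℝ) (d : ℕ) : Measure (Fin d → ℝ) :=
  Measure.pi fun _ => volume.withDensity fun x => ENNReal.ofReal (ρ x)

/-- law of the proposal `Y ~ N(x, l²/d · I_d)` -/
def gaussPi (l : ℝ) (d : ℕ) (x : Fin d → ℝ) : Measure (Fin d → ℝ) :=
  Measure.pi fun i => gaussianReal (x i) ((l ^ 2 / (d:ℝ)).toNNReal)

/-- the RWM generator `G_d` -/
def Gd (ρ : ℝ → ℝ) (l : ℝ) (d : ℕ) [NeZero d] (f : ℝ → ℝ) (x : Fin d → ℝ) : ℝ :=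
  (d:ℝ) * ∫ y, (f (y 0) - f (x 0)) * min 1 ((∏ i, ρ (y i)) / ∏ i, ρ (x i)) ∂(gaussPi l d x)

/-- the set `A` associated with the constant `c_A` -/
def Aset (ρ : ℝ → ℝ) (c : ℝ) : Set ℝ :=
  {x | |d2l ρ x| < (dl ρ x) ^ 2 ∧ 1 / c < |dl ρ x| ∧ |dl ρ x| < c}

/-- indices `2,…,d` (all coordinates except the first) -/
def restIdx (d : ℕ) : Finset (Fin d) := Finset.univ.filter fun i => (i : ℕ) ≠ 0

/-- the typical sets `𝒜_d` -/
def Ad (ρ : ℝ → ℝ) (c : ℝ) (a : ℕ → ℝ) (d : ℕ) : Set (Fin d → ℝ) :=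
  {x | (1 / ((d : ℝ) - 1)) * ∑ i ∈ restIdx d, Real.exp |x i| < 2 * rhoE ρ (fun t => Real.exp |t|)
    ∧ (∫ t in Aset ρ c, ρ t) / 2 <
        (1 / ((d : ℝ) - 1)) * ∑ i ∈ restIdx d, (Aset ρ c).indicator (fun _ => (1:ℝ)) (x i)
    ∧ (1 / ((d : ℝ) - 1)) * |∑ i ∈ restIdx d, ((dl ρ (x i)) ^ 2 - Jc ρ)| <
        a d / Real.sqrt d * Real.sqrt (3 * rhoE ρ fun t => ((dl ρ t) ^ 2 - Jc ρ) ^ 2)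
    ∧ (1 / ((d : ℝ) - 1)) * |∑ i ∈ restIdx d, (d2l ρ (x i) + Jc ρ)| <
        a d / Real.sqrt d * Real.sqrt (3 * rhoE ρ fun t => (d2l ρ t + Jc ρ) ^ 2)}

/-- `K(x,y)` -/
def Kf (ρ : ℝ → ℝ) (c : ℝ) (x y : ℝ) : ℝ :=
  dl ρ x * (y - x) + d2l ρ x / 2 * (y - x) ^ 2
    + (dl ρ x) ^ 3 * (Aset ρ c).indicator (fun _ => (1:ℝ)) x / 3 * (y - x) ^ 3

/-- `Σ_{i=2}^d K(x_i, Y_i)` -/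
def SK (ρ : ℝ → ℝ) (c : ℝ) (d : ℕ) (x Y : Fin d → ℝ) : ℝ :=
  ∑ i ∈ restIdx d, Kf ρ c (x i) (Y i)

/-- `β(x,y)` -/
def betaF (ρ : ℝ → ℝ) (c l : ℝ) (d : ℕ) [NeZero d] (x : Fin d → ℝ) (y : ℝ) : ℝ :=
  ∫ Y, min 1 (Real.exp (dl ρ (x 0) * (y - x 0) + SK ρ c d x Y)) ∂(gaussPi l d x)

/-- `G̃_d` -/
def tGd (ρ : ℝ → ℝ) (c l : ℝ) (d : ℕ) [NeZero d] (f : ℝ → ℝ) (x : Fin d → ℝ) : ℝ :=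
  (d:ℝ) * ∫ y, (f y - f (x 0)) * betaF ρ c l d x y
    ∂(gaussianReal (x 0) ((l ^ 2 / (d:ℝ)).toNNReal))

/-- `Ĝ_d` -/
def hGd (ρ : ℝ → ℝ) (c l : ℝ) (d : ℕ) [NeZero d] (f : ℝ → ℝ) (x : Fin d → ℝ) : ℝ :=
  l ^ 2 / 2 * deriv (deriv f) (x 0) * (∫ Y, min 1 (Real.exp (SK ρ c d x Y)) ∂(gaussPi l d x))
    + l ^ 2 * deriv f (x 0) * dl ρ (x 0) *
      (∫ Y, (Set.Iio (0:ℝ)).indicator Real.exp (SK ρ c d x Y) ∂(gaussPi l d x))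

/-- `𝒩(x,Y)` -/
def Nf (ρ : ℝ → ℝ) (l : ℝ) (d : ℕ) (x Y : Fin d → ℝ) : ℝ :=
  l ^ 2 / (2 * (d:ℝ)) * ∑ i ∈ restIdx d, d2l ρ (x i)
    + ∑ i ∈ restIdx d, dl ρ (x i) * (Y i - x i)

/-- `Ğ_d` -/
def bGd (ρ : ℝ → ℝ) (l : ℝ) (d : ℕ) [NeZero d] (f : ℝ → ℝ) (x : Fin d → ℝ) : ℝ :=
  l ^ 2 / 2 * deriv (deriv f) (x 0) * (∫ Y, min 1 (Real.exp (Nf ρ l d x Y)) ∂(gaussPi l d x))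
    + l ^ 2 * deriv f (x 0) * dl ρ (x 0) *
      (∫ Y, (Set.Iio (0:ℝ)).indicator Real.exp (Nf ρ l d x Y) ∂(gaussPi l d x))

/-- **Proposition.** There is a constant `c_A > 0` such that the open set
`A = {x : |(log ρ)''(x)| < ((log ρ)'(x))², 1/c_A < |(log ρ)'(x)| < c_A}` has positive
`ρ`-measure. -/
theorem stmt3 (ρ : ℝ → ℝ) (hmeas : Measurable ρ) (hpos : ∀ x, 0 < ρ x)
    (hint : ∫ x, ρ x = 1) (hlog : MemS 4 fun x => Real.log (ρ x))
    (htail : SuperExpTails ρ) :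
    ∃ c > (0:ℝ), 0 < ∫ x in Aset ρ c, ρ x := by
  classical
  set L : ℝ → ℝ := fun x => Real.log (ρ x) with hL
  have hC4 : ContDiff ℝ 4 L := hlog.1
  have hg3 : ContDiff ℝ 3 (dl ρ) := by
    have h4 : ContDiff ℝ ((3:WithTop ℕ∞)+1) L := by norm_num; exact_mod_cast hC4
    exact (contDiff_succ_iff_deriv.mp h4).2.2
  have hg'2 : ContDiff ℝ 2 (d2l ρ) := by
    have h3 : ContDiff ℝ ((2:WithTop ℕ∞)+1) (dl ρ) := by norm_num; exact_mod_cast hg3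
    exact (contDiff_succ_iff_deriv.mp h3).2.2
  have contg : Continuous (dl ρ) := hg3.continuous
  have contg' : Continuous (d2l ρ) := hg'2.continuous
  have diffg : Differentiable ℝ (dl ρ) := hg3.differentiable (by norm_num)
  -- threshold X with g ≤ -1 on [X, ∞)
  obtain ⟨X, hX⟩ : ∃ X : ℝ, ∀ x ≥ X, dl ρ x ≤ -1 := by
    have := htail.1.eventually (eventually_le_atBot (-1:ℝ))
    exact eventually_atTop.mp this
  -- find x₀ ≥ X with |(dl ρ)'| < (dl ρ)²
  have hx0 : ∃ x₀, X ≤ x₀ ∧ |d2l ρ x₀| < (dl ρ x₀) ^ 2 := by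
    by_contra hcon
    push_neg at hcon
    have hge : ∀ x, X ≤ x → (dl ρ x) ^ 2 ≤ |d2l ρ x| := hcon
    have hone : ∀ x, X ≤ x → (1:ℝ) ≤ (dl ρ x) ^ 2 := by
      intro x hx
      nlinarith [hX x hx]
    have hne : ∀ x, X ≤ x → d2l ρ x ≠ 0 := by
      intro x hx h0
      have := hge x hx
      rw [h0, abs_zero] at this
      nlinarith [hone x hx]
    -- by IVT, d2l has constant sign on [X, ∞)
    have hsign : (∀ x, X ≤ x → 0 < d2l ρ x) ∨ (∀ x, X ≤ x → d2l ρ x < 0) := by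
      rcases lt_or_gt_of_ne (hne X le_rfl) with hneg | hpos
      · right
        intro x hx
        by_contra hle
        push_neg at hle
        have h0lt : 0 < d2l ρ x := lt_of_le_of_ne hle (Ne.symm (hne x hx))
        have : (0:ℝ) ∈ d2l ρ '' Set.Icc X x :=
          intermediate_value_Icc hx (contg'.continuousOn) ⟨hneg.le, h0lt.le⟩
        obtain ⟨z, hz, hz0⟩ := this
        exact hne z hz.1 hz0
      · left
        intro x hx
        by_contra hle
        push_neg at hle
        have h0lt : d2l ρ x < 0 := lt_of_le_of_ne hle (hne x hx)
        have : (0:ℝ) ∈ d2l ρ '' Set.Icc X x :=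
          intermediate_value_Icc' hx (contg'.continuousOn) ⟨h0lt.le, hpos.le⟩
        obtain ⟨z, hz, hz0⟩ := this
        exact hne z hz.1 hz0
    rcases hsign with hpos' | hneg'
    · -- g' ≥ g² ≥ 1 on [X,∞): g increases without bound, contradiction with g ≤ -1
      have hmono : MonotoneOn (fun x => dl ρ x - x) (Set.Ici X) := by
        apply monotoneOn_of_deriv_nonneg (convex_Ici X)
          ((contg.sub continuous_id').continuousOn)
        · exact fun x _ => ((diffg x).sub (differentiableAt_fun_id)).differentiableWithinAt
        · intro x hx
          rw [interior_Ici] at hx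
          have hx' : X ≤ x := le_of_lt hx
          have hd : deriv (fun x => dl ρ x - x) x = d2l ρ x - 1 := by
            rw [deriv_fun_sub (diffg x) differentiableAt_fun_id, deriv_id'']
            rfl
          rw [show (dl ρ - fun x => x) = fun x => dl ρ x - x from rfl, hd]
          have h1 := hone x hx'
          have h2 := hge x hx'
          have h3 := hpos' x hx'
          rw [abs_of_pos h3] at h2
          linarith
      have hXneg : dl ρ X ≤ -1 := hX X le_rfl
      have hmem : X + (-(dl ρ X)) ∈ Set.Ici X := by simp; linarith
      have key := hmono (Set.self_mem_Ici) hmem (by linarith)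
      simp only at key
      have h2 := hX (X + (-(dl ρ X))) (by linarith)
      linarith
    · -- g' ≤ -g² on [X,∞): 1/g increases at rate ≥ 1, contradiction
      have hgneg : ∀ x, X ≤ x → dl ρ x ≠ 0 := fun x hx => by nlinarith [hX x hx]
      have hmono : MonotoneOn (fun x => (dl ρ x)⁻¹ - x) (Set.Ici X) := by
        apply monotoneOn_of_deriv_nonneg (convex_Ici X)
        · apply ContinuousOn.sub _ continuous_id.continuousOn
          exact ContinuousOn.inv₀ contg.continuousOn (fun x hx => hgneg x hx)
        · intro x hx
          rw [interior_Ici] at hx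
          exact (((diffg x).inv (hgneg x hx.le)).sub differentiableAt_fun_id).differentiableWithinAt
        · intro x hx
          rw [interior_Ici] at hx
          have hx' : X ≤ x := hx.le
          have hd : deriv (fun x => (dl ρ x)⁻¹ - x) x = -(d2l ρ x) / (dl ρ x) ^ 2 - 1 := by
            rw [deriv_fun_sub (f := fun y => (dl ρ y)⁻¹) ((diffg x).inv (hgneg x hx')) differentiableAt_fun_id, deriv_id'',
              deriv_fun_inv'' (diffg x) (hgneg x hx')]
            rfl
          rw [hd]
          have h2 := hge x hx'
          have h3 := hneg' x hx'
          rw [abs_of_neg h3] at h2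
          have h4 : (0:ℝ) < (dl ρ x) ^ 2 := by nlinarith [hone x hx']
          rw [sub_nonneg, le_div_iff₀ h4]
          linarith
      have hmem : X + 2 ∈ Set.Ici X := by simp
      have key := hmono (Set.self_mem_Ici) hmem (by linarith)
      simp only at key
      -- (dl ρ X)⁻¹ ≥ -1 and (dl ρ (X+2))⁻¹ < 0
      have hXle := hX X le_rfl
      have hX2le := hX (X + 2) (by linarith)
      have h1 : -1 ≤ (dl ρ X)⁻¹ := by
        have hne : dl ρ X ≠ 0 := by linarith
        have : dl ρ X * (dl ρ X)⁻¹ = 1 := mul_inv_cancel₀ hne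
        nlinarith
      have h2 : (dl ρ (X + 2))⁻¹ < 0 := inv_lt_zero.mpr (by linarith)
      linarith
  obtain ⟨x₀, hx₀X, hx₀⟩ := hx0
  have hgx₀ : dl ρ x₀ ≤ -1 := hX x₀ hx₀X
  set c : ℝ := |dl ρ x₀| + 1 with hc
  have habs : 1 ≤ |dl ρ x₀| := by
    rw [abs_of_neg (by linarith)]; linarith
  have hcpos : 0 < c := by positivity
  refine ⟨c, hcpos, ?_⟩
  -- x₀ is in Aset with room to spare; Aset is a neighborhood of x₀
  have hmemA : Aset ρ c ∈ nhds x₀ := by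
    have h1 : ∀ᶠ x in nhds x₀, |d2l ρ x| < (dl ρ x) ^ 2 :=
      ContinuousAt.eventually_lt contg'.abs.continuousAt ((contg.pow 2)).continuousAt hx₀
    have h2 : ∀ᶠ x in nhds x₀, 1 / c < |dl ρ x| := by
      have hlt : 1 / c < |dl ρ x₀| := by
        have : 1 / c ≤ 1 / 2 := by
          apply div_le_div_of_nonneg_left (by norm_num) (by norm_num)
          linarith
        linarith
      exact ContinuousAt.eventually_lt continuousAt_const contg.abs.continuousAt hlt
    have h3 : ∀ᶠ x in nhds x₀, |dl ρ x| < c := by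
      have hlt : |dl ρ x₀| < c := by rw [hc]; linarith
      exact ContinuousAt.eventually_lt contg.abs.continuousAt continuousAt_const hlt
    filter_upwards [h1, h2, h3] with x hx1 hx2 hx3
    exact ⟨hx1, hx2, hx3⟩
  obtain ⟨ε, hε, hball⟩ := Metric.mem_nhds_iff.mp hmemA
  -- ρ is integrable
  have hint' : Integrable ρ := by
    by_contra h
    rw [integral_undef h] at hint
    norm_num at hint
  -- positivity of the set integral
  rw [setIntegral_pos_iff_support_of_nonneg_ae
    (ae_restrict_of_ae (Eventually.of_forall fun x => (hpos x).le))
    hint'.integrableOn]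
  have hsupp : Function.support ρ = Set.univ := by
    ext x; simp [Function.support, (hpos x).ne']
  rw [hsupp, Set.univ_inter]
  calc (0:ENNReal) < volume (Metric.ball x₀ ε) := Metric.measure_ball_pos volume x₀ hε
    _ ≤ volume (Aset ρ c) := measure_mono hball
end
end

section
/- Pick x ∈ A and let Y ~ N(x, l²/d) for constants l > 0 and d ∈ ℕ. Then the random variable K(x,Y) has a density q_x, and ‖q_x‖_∞ ≤ 4c_A√d/(3l√(2π)). -/
open MeasureTheory ProbabilityTheory Filter Set

noncomputable section

/-- One-variable change of variables for Lebesgue integrals. -/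
lemma myCov_stmt9 {s : Set ℝ} {f : ℝ → ℝ} {f' : ℝ → ℝ}
    (hs : MeasurableSet s) (hf' : ∀ x ∈ s, HasDerivWithinAt f (f' x) s x)
    (hf : Set.InjOn f s) (g : ℝ → ENNReal) :
    ∫⁻ x in f '' s, g x = ∫⁻ x in s, ENNReal.ofReal |f' x| * g (f x) := by
  simpa only [ContinuousLinearMap.det_toSpanSingleton] using
    MeasureTheory.lintegral_image_eq_lintegral_abs_det_fderiv_mul volume hs
      (fun x hx => (hf' x hx).hasFDerivWithinAt) hf g

set_option maxHeartbeats 1000000 in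
/-- **Lemma.** For `x ∈ A` and `Y ~ N(x, l²/d)`, the random variable `K(x,Y)` has a density
`q_x` with `‖q_x‖_∞ ≤ 4 c_A √d / (3 l √(2π))`. -/
theorem stmt9 (ρ : ℝ → ℝ) (hmeas : Measurable ρ) (hpos : ∀ x, 0 < ρ x)
    (hint : ∫ x, ρ x = 1) (hlog : MemS 4 fun x => Real.log (ρ x))
    (htail : SuperExpTails ρ)
    (c : ℝ) (hc : 0 < c) (hA : 0 < ∫ x in Aset ρ c, ρ x)
    (l : ℝ) (hl : 0 < l) (d : ℕ) (hd : 0 < d)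
    (x : ℝ) (hx : x ∈ Aset ρ c) :
    ∃ q : ℝ → ℝ, Measurable q ∧
      Measure.map (fun y => Kf ρ c x y) (gaussianReal x ((l ^ 2 / (d:ℝ)).toNNReal)) =
        volume.withDensity (fun t => ENNReal.ofReal (q t)) ∧
      ∀ᵐ t ∂(volume : Measure ℝ),
        |q t| ≤ 4 * c * Real.sqrt d / (3 * l * Real.sqrt (2 * Real.pi)) := by
  classical
  set v : NNReal := (l ^ 2 / (d:ℝ)).toNNReal with hvdef
  have hd0 : (0:ℝ) < d := by exact_mod_cast hd
  have hvpos : (0:ℝ) < l ^ 2 / d := by positivity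
  have hvne : v ≠ 0 := by
    simp only [hvdef, ne_eq, Real.toNNReal_eq_zero, not_le]
    exact hvpos
  have hvco : ((v:NNReal):ℝ) = l ^ 2 / d := Real.coe_toNNReal _ hvpos.le
  have hmem := hx
  obtain ⟨h1, h2, h3⟩ := hx
  set u := dl ρ x with hudef
  set w := d2l ρ x with hwdef
  have hcinv : 0 < 1 / c := by positivity
  have huabs : 0 < |u| := lt_trans hcinv h2
  have hu0 : u ≠ 0 := fun h => by simp [h] at huabs
  have hu2 : 0 < u ^ 2 := by nlinarith [huabs, sq_abs u]
  -- the cubic map and its derivative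
  set φ : ℝ → ℝ := fun y => u * (y - x) + w / 2 * (y - x) ^ 2 + u ^ 3 / 3 * (y - x) ^ 3
    with hφdef
  set φ' : ℝ → ℝ := fun y => u + w * (y - x) + u ^ 3 * (y - x) ^ 2 with hφ'def
  have hKφ : (fun y => Kf ρ c x y) = φ := by
    funext y
    have hind : (Aset ρ c).indicator (fun _ => (1:ℝ)) x = 1 :=
      Set.indicator_of_mem hmem _
    simp only [Kf, hφdef, ← hudef, ← hwdef, hind]
    ring
  have hder : ∀ y, HasDerivAt φ (φ' y) y := by
    intro y
    have h0 : HasDerivAt (fun y : ℝ => y - x) 1 y := (hasDerivAt_id y).sub_const x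
    have := ((h0.const_mul u).add ((h0.pow 2).const_mul (w / 2))).add
      ((h0.pow 3).const_mul (u ^ 3 / 3))
    refine this.congr_deriv ?_
    push_cast
    ring
  have hw2 : w ^ 2 < u ^ 4 := by nlinarith [sq_abs w, sq_abs (u ^ 2), abs_nonneg w, h1]
  have hlow : ∀ y, 3 / 4 * u ^ 2 ≤ u * φ' y := by
    intro y
    simp only [hφ'def]
    nlinarith [sq_nonneg (2 * u ^ 3 * (y - x) + w), hu2, hw2]
  have hphine : ∀ y, φ' y ≠ 0 := by
    intro y h
    have := hlow y
    rw [h, mul_zero] at this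
    nlinarith
  have habs : ∀ y, 3 / (4 * c) ≤ |φ' y| := by
    intro y
    have h5 : 3 / 4 * u ^ 2 ≤ |u| * |φ' y| :=
      le_trans (hlow y) (by rw [← abs_mul]; exact le_abs_self _)
    have h6 : 3 / 4 * |u| ≤ |φ' y| := by
      rw [← sq_abs u] at h5
      nlinarith [abs_nonneg (φ' y), huabs]
    have h7 : 3 / (4 * c) ≤ 3 / 4 * |u| := by
      rw [div_le_iff₀ (by positivity)]
      have := (div_lt_iff₀ hc).mp h2
      nlinarith
    linarith
  -- the rescaled map g = u * φ is strictly monotone and surjective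
  set g : ℝ → ℝ := fun y => u * φ y with hgdef
  have hgder : ∀ y, HasDerivAt g (u * φ' y) y := fun y => (hder y).const_mul u
  have hgmono : StrictMono g :=
    strictMono_of_deriv_pos fun y => by
      rw [(hgder y).deriv]; exact lt_of_lt_of_le (by nlinarith) (hlow y)
  set δ : ℝ := 3 / 4 * u ^ 2 with hδdef
  have hδ : 0 < δ := by rw [hδdef]; nlinarith
  have hmono2 : Monotone fun t => g t - δ * t := by
    have hD : ∀ y, HasDerivAt (fun t => g t - δ * t) (u * φ' y - δ) y := by
      intro y
      have := (hgder y).sub ((hasDerivAt_id y).const_mul δ)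
      exact this.congr_deriv (by ring)
    apply monotone_of_deriv_nonneg (fun y => (hD y).differentiableAt)
    intro y
    rw [(hD y).deriv]
    have := hlow y
    linarith [hδdef]
  have hbtop : Tendsto (fun t : ℝ => g 0 + δ * t) atTop atTop :=
    tendsto_atTop_add_const_left atTop (g 0)
      ((tendsto_const_mul_atTop_of_pos hδ).mpr tendsto_id)
  have hbbot : Tendsto (fun t : ℝ => g 0 + δ * t) atBot atBot :=
    tendsto_atBot_add_const_left atBot (g 0)
      ((tendsto_const_mul_atBot_of_pos hδ).mpr tendsto_id)
  have hgtop : Tendsto g atTop atTop := by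
    apply tendsto_atTop_mono' atTop ?_ hbtop
    filter_upwards [eventually_ge_atTop (0:ℝ)] with t ht
    have := hmono2 ht
    simp only at this
    linarith
  have hgbot : Tendsto g atBot atBot := by
    apply tendsto_atBot_mono' atBot ?_ hbbot
    filter_upwards [eventually_le_atBot (0:ℝ)] with t ht
    have := hmono2 ht
    simp only at this
    linarith
  have hgcont : Continuous g := by
    rw [continuous_iff_continuousAt]; exact fun y => (hgder y).continuousAt
  have hgsurj : Function.Surjective g := hgcont.surjective hgtop hgbot
  have hφinj : Function.Injective φ := by
    intro a b hab
    exact hgmono.injective (by simp only [hgdef, hab])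
  -- the inverse map ψ
  set e : ℝ ≃o ℝ := StrictMono.orderIsoOfSurjective g hgmono hgsurj with hedef
  set ψ : ℝ → ℝ := fun y => e.symm (u * y) with hψdef
  have hge : ∀ z, g (e.symm z) = z := by
    intro z
    have h8 := e.apply_symm_apply z
    rwa [show (e : ℝ → ℝ) = g from StrictMono.coe_orderIsoOfSurjective g hgmono hgsurj] at h8
  have hφψ : ∀ y, φ (ψ y) = y := by
    intro y
    have h9 : g (ψ y) = u * y := hge (u * y)
    exact mul_left_cancel₀ hu0 h9
  have hψφ : ∀ t, ψ (φ t) = t := fun t => hφinj (hφψ (φ t))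
  have hψcont : Continuous ψ :=
    e.symm.continuous.comp (continuous_const.mul continuous_id)
  have hψder : ∀ y, HasDerivAt ψ (φ' (ψ y))⁻¹ y := fun y =>
    HasDerivAt.of_local_left_inverse hψcont.continuousAt (hder (ψ y)) (hphine _)
      (Filter.Eventually.of_forall hφψ)
  have hψinj : Function.Injective ψ := Function.LeftInverse.injective hφψ
  have hφ'cont : Continuous φ' := by
    rw [hφ'def]; fun_prop
  have hφcont : Continuous φ := by
    rw [hφdef]; fun_prop
  -- the density
  refine ⟨fun t => gaussianPDFReal x v (ψ t) * |φ' (ψ t)|⁻¹, ?_, ?_, ?_⟩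
  · exact ((measurable_gaussianPDFReal x v).comp hψcont.measurable).mul
      ((hφ'cont.comp hψcont).abs.measurable.inv)
  · rw [hKφ, gaussianReal_of_var_ne_zero x hvne]
    ext s hs
    rw [Measure.map_apply hφcont.measurable hs,
      withDensity_apply _ (hs.preimage hφcont.measurable), withDensity_apply _ hs]
    have himg : ψ '' s = φ ⁻¹' s := by
      ext t
      constructor
      · rintro ⟨a, ha, rfl⟩
        simpa [Set.mem_preimage, hφψ] using ha
      · intro ht
        exact ⟨φ t, ht, hψφ t⟩
    rw [show φ ⁻¹' s = ψ '' s from himg.symm,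
      myCov_stmt9 hs (fun t _ => (hψder t).hasDerivWithinAt) hψinj.injOn (gaussianPDF x v)]
    refine setLIntegral_congr_fun hs (fun t _ => ?_)
    rw [gaussianPDF, ← ENNReal.ofReal_mul (abs_nonneg _)]
    congr 1
    rw [abs_inv]
    ring
  · refine Filter.Eventually.of_forall fun t => ?_
    have hq0 : 0 ≤ gaussianPDFReal x v (ψ t) * |φ' (ψ t)|⁻¹ :=
      mul_nonneg (gaussianPDFReal_nonneg _ _ _) (inv_nonneg.2 (abs_nonneg _))
    rw [abs_of_nonneg hq0]
    have hb1 : gaussianPDFReal x v (ψ t) ≤ (Real.sqrt (2 * Real.pi * v))⁻¹ := by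
      rw [gaussianPDFReal]
      apply mul_le_of_le_one_right (by positivity)
      calc Real.exp (-(ψ t - x) ^ 2 / (2 * v)) ≤ Real.exp 0 := by
            apply Real.exp_le_exp.mpr
            apply div_nonpos_iff.mpr
            right
            constructor
            · simpa using sq_nonneg (ψ t - x)
            · positivity
        _ = 1 := Real.exp_zero
    have hb2 : |φ' (ψ t)|⁻¹ ≤ 4 * c / 3 := by
      calc |φ' (ψ t)|⁻¹ ≤ (3 / (4 * c))⁻¹ :=
            inv_anti₀ (by positivity) (habs (ψ t))
        _ = 4 * c / 3 := by rw [inv_div]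
    have hsd : (0:ℝ) < Real.sqrt d := Real.sqrt_pos.mpr hd0
    have hs2π : (0:ℝ) < Real.sqrt (2 * Real.pi) := Real.sqrt_pos.mpr (by positivity)
    have hkey : Real.sqrt (2 * Real.pi * (v:ℝ)) = Real.sqrt (2 * Real.pi) * l / Real.sqrt d := by
      rw [hvco, show 2 * Real.pi * (l ^ 2 / d) = 2 * Real.pi * l ^ 2 / d by ring,
        Real.sqrt_div (by positivity), Real.sqrt_mul (by positivity),
        Real.sqrt_sq hl.le]
    calc gaussianPDFReal x v (ψ t) * |φ' (ψ t)|⁻¹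
        ≤ (Real.sqrt (2 * Real.pi * v))⁻¹ * (4 * c / 3) :=
          mul_le_mul hb1 hb2 (inv_nonneg.2 (abs_nonneg _)) (by positivity)
      _ = 4 * c * Real.sqrt d / (3 * l * Real.sqrt (2 * Real.pi)) := by
          rw [hkey]
          field_simp
end
end

section
/- Let ρ be a strictly positive probability density on ℝ satisfying lim_{|x|→∞} (x/|x|)·(log ρ)'(x) = −∞, and suppose log ρ ∈ S^{n_ρ} and f ∈ S^{n_f} for some integers n_ρ, n_f ∈ ℕ∪{0}. Then the function f̂(x) := ∫₀^x (2/(h(l)ρ(y))) ∫_{−∞}^y ρ(z)(ρ(f)−f(z)) dz dy belongs to S^{min(n_f+2, n_ρ+1)}. -/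
open MeasureTheory ProbabilityTheory Filter Set

noncomputable section

/-- the solution `f̂` of the Poisson equation for the limiting Langevin diffusion -/
def fhat (ρ : ℝ → ℝ) (l : ℝ) (f : ℝ → ℝ) (x : ℝ) : ℝ :=
  ∫ y in (0:ℝ)..x, 2 / (hc ρ l * ρ y) * ∫ z in Set.Iic y, ρ z * (rhoE ρ f - f z)

namespace Stmt12Aux

/-- sub-exponential growth -/
def SE (g : ℝ → ℝ) : Prop := ∀ s > (0:ℝ), ∃ C : ℝ, ∀ x : ℝ, |g x| ≤ C * Real.exp (s * |x|)

lemma SE_of_bddAbove {g : ℝ → ℝ}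
    (h : ∀ s > (0:ℝ), BddAbove (Set.range fun x => Real.exp (-(s * |x|)) * |g x|)) : SE g := by
  intro s hs
  obtain ⟨C, hC⟩ := h s hs
  refine ⟨C, fun x => ?_⟩
  have h1 : Real.exp (-(s * |x|)) * |g x| ≤ C := hC (Set.mem_range_self x)
  have h2 := mul_le_mul_of_nonneg_left h1 (Real.exp_nonneg (s * |x|))
  calc |g x| = Real.exp (s * |x|) * (Real.exp (-(s * |x|)) * |g x|) := by
        rw [← mul_assoc, ← Real.exp_add]; simp
    _ ≤ Real.exp (s * |x|) * C := h2
    _ = C * Real.exp (s * |x|) := mul_comm _ _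

lemma bddAbove_of_SE {g : ℝ → ℝ} (h : SE g) {s : ℝ} (hs : 0 < s) :
    BddAbove (Set.range fun x => Real.exp (-(s * |x|)) * |g x|) := by
  obtain ⟨C, hC⟩ := h s hs
  refine ⟨C, ?_⟩
  rintro y ⟨x, rfl⟩
  calc Real.exp (-(s * |x|)) * |g x| ≤ Real.exp (-(s * |x|)) * (C * Real.exp (s * |x|)) :=
        mul_le_mul_of_nonneg_left (hC x) (Real.exp_nonneg _)
    _ = C := by rw [mul_comm C, ← mul_assoc, ← Real.exp_add]; simp

lemma SE_bound_nonneg {g : ℝ → ℝ} {C s : ℝ} (hC : ∀ x, |g x| ≤ C * Real.exp (s * |x|)) :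
    0 ≤ C := by
  have := hC 0
  simp only [abs_zero, mul_zero, Real.exp_zero, mul_one] at this
  exact le_trans (abs_nonneg _) this

lemma SE_congr {g g' : ℝ → ℝ} (h : ∀ x, g x = g' x) (hg : SE g) : SE g' := by
  intro s hs
  obtain ⟨C, hC⟩ := hg s hs
  exact ⟨C, fun x => (h x) ▸ hC x⟩

lemma SE_const (c : ℝ) : SE (fun _ => c) := by
  intro s hs
  refine ⟨|c|, fun x => ?_⟩
  have h1 : (1:ℝ) ≤ Real.exp (s * |x|) := Real.one_le_exp (mul_nonneg hs.le (abs_nonneg x))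
  nlinarith [abs_nonneg c]

lemma SE.sub {g₁ g₂ : ℝ → ℝ} (h₁ : SE g₁) (h₂ : SE g₂) : SE (fun x => g₁ x - g₂ x) := by
  intro s hs
  obtain ⟨C₁, hC₁⟩ := h₁ s hs
  obtain ⟨C₂, hC₂⟩ := h₂ s hs
  refine ⟨C₁ + C₂, fun x => ?_⟩
  calc |g₁ x - g₂ x| ≤ |g₁ x| + |g₂ x| := abs_sub _ _
    _ ≤ C₁ * Real.exp (s * |x|) + C₂ * Real.exp (s * |x|) := add_le_add (hC₁ x) (hC₂ x)
    _ = (C₁ + C₂) * Real.exp (s * |x|) := by ring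

lemma SE.const_mul {g : ℝ → ℝ} (h : SE g) (a : ℝ) : SE (fun x => a * g x) := by
  intro s hs
  obtain ⟨C, hC⟩ := h s hs
  refine ⟨|a| * C, fun x => ?_⟩
  rw [abs_mul, mul_assoc]
  exact mul_le_mul_of_nonneg_left (hC x) (abs_nonneg a)

/-- iterated derivative of a difference -/
lemma itd_sub {k : ℕ} {g₁ g₂ : ℝ → ℝ} (h₁ : ContDiff ℝ k g₁) (h₂ : ContDiff ℝ k g₂) (x : ℝ) :
    iteratedDeriv k (fun y => g₁ y - g₂ y) x = iteratedDeriv k g₁ x - iteratedDeriv k g₂ x := by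
  have h := iteratedDerivWithin_sub (𝕜 := ℝ) (Set.mem_univ x) uniqueDiffOn_univ
    h₁.contDiffWithinAt h₂.contDiffWithinAt
  simp only [iteratedDerivWithin_univ] at h; exact h

/-- iterated derivative of a constant multiple -/
lemma itd_const_mul {k : ℕ} {w : ℝ → ℝ} (hw : ContDiff ℝ k w) (a : ℝ) (x : ℝ) :
    iteratedDeriv k (fun y => a * w y) x = a * iteratedDeriv k w x := by
  have h := iteratedDerivWithin_const_mul (𝕜 := ℝ) (Set.mem_univ x) uniqueDiffOn_univ a
    hw.contDiffWithinAt
  simpa [iteratedDerivWithin_univ] using h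

/-- sub-exponential bounds are preserved by products, at the level of iterated derivatives. -/
lemma SE_itd_mul {k : ℕ} {g₁ g₂ : ℝ → ℝ} (h₁ : ContDiff ℝ k g₁) (h₂ : ContDiff ℝ k g₂)
    (b₁ : ∀ j ≤ k, SE (iteratedDeriv j g₁)) (b₂ : ∀ j ≤ k, SE (iteratedDeriv j g₂)) :
    SE (iteratedDeriv k (fun x => g₁ x * g₂ x)) := by
  intro s hs
  have hs2 : (0:ℝ) < s / 2 := by linarith
  have hb₁ : ∀ j : ℕ, ∃ C, ∀ x, j ≤ k → |iteratedDeriv j g₁ x| ≤ C * Real.exp (s / 2 * |x|) := by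
    intro j
    by_cases hj : j ≤ k
    · obtain ⟨C, hC⟩ := b₁ j hj (s / 2) hs2
      exact ⟨C, fun x _ => hC x⟩
    · exact ⟨0, fun x hj' => absurd hj' hj⟩
  have hb₂ : ∀ j : ℕ, ∃ C, ∀ x, j ≤ k → |iteratedDeriv j g₂ x| ≤ C * Real.exp (s / 2 * |x|) := by
    intro j
    by_cases hj : j ≤ k
    · obtain ⟨C, hC⟩ := b₂ j hj (s / 2) hs2
      exact ⟨C, fun x _ => hC x⟩
    · exact ⟨0, fun x hj' => absurd hj' hj⟩
  choose C₁ hC₁ using hb₁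
  choose C₂ hC₂ using hb₂
  refine ⟨∑ i ∈ Finset.range (k + 1), (k.choose i : ℝ) * C₁ i * C₂ (k - i), fun x => ?_⟩
  have key := norm_iteratedFDeriv_mul_le (𝕜 := ℝ) (N := (k : WithTop ℕ∞)) h₁ h₂ x le_rfl
  have habs : |iteratedDeriv k (fun x => g₁ x * g₂ x) x|
      = ‖iteratedFDeriv ℝ k (fun x => g₁ x * g₂ x) x‖ := by
    rw [norm_iteratedFDeriv_eq_norm_iteratedDeriv, Real.norm_eq_abs]
  rw [habs, Finset.sum_mul]
  refine le_trans key (Finset.sum_le_sum fun i hi => ?_)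
  have hik : i ≤ k := Nat.lt_succ_iff.mp (Finset.mem_range.mp hi)
  have e₁ : ‖iteratedFDeriv ℝ i g₁ x‖ = |iteratedDeriv i g₁ x| := by
    rw [norm_iteratedFDeriv_eq_norm_iteratedDeriv, Real.norm_eq_abs]
  have e₂ : ‖iteratedFDeriv ℝ (k - i) g₂ x‖ = |iteratedDeriv (k - i) g₂ x| := by
    rw [norm_iteratedFDeriv_eq_norm_iteratedDeriv, Real.norm_eq_abs]
  rw [e₁, e₂]
  have hx₁ := hC₁ i x hik
  have hx₂ := hC₂ (k - i) x (Nat.sub_le _ _)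
  have hn₁ : (0:ℝ) ≤ C₁ i * Real.exp (s / 2 * |x|) := le_trans (abs_nonneg _) hx₁
  have hchoose : (0:ℝ) ≤ (k.choose i : ℝ) := Nat.cast_nonneg _
  calc (k.choose i : ℝ) * |iteratedDeriv i g₁ x| * |iteratedDeriv (k - i) g₂ x|
      ≤ (k.choose i : ℝ) * (C₁ i * Real.exp (s / 2 * |x|)) * (C₂ (k - i) * Real.exp (s / 2 * |x|)) := by
        apply mul_le_mul
        · exact mul_le_mul_of_nonneg_left hx₁ hchoose
        · exact hx₂
        · exact abs_nonneg _
        · exact mul_nonneg hchoose hn₁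
    _ = (k.choose i : ℝ) * C₁ i * C₂ (k - i) * (Real.exp (s / 2 * |x|) * Real.exp (s / 2 * |x|)) := by
        ring
    _ = (k.choose i : ℝ) * C₁ i * C₂ (k - i) * Real.exp (s * |x|) := by
        rw [← Real.exp_add]; ring_nf

lemma itd_const (k : ℕ) (c : ℝ) :
    iteratedDeriv k (fun _ : ℝ => c) = fun _ : ℝ => if k = 0 then c else 0 := by
  induction k generalizing c with
  | zero => simp [iteratedDeriv_zero]
  | succ j ih =>
    rw [iteratedDeriv_succ']
    have h : (deriv fun _ : ℝ => c) = fun _ : ℝ => (0:ℝ) := funext fun x => deriv_const x c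
    rw [h, ih 0]
    simp

/-- the decay estimates coming from super-exponential tails -/
lemma decay {L : ℝ → ℝ} (hcont : Continuous L)
    (htop : Tendsto (deriv L) atTop atBot) (hbot : Tendsto (deriv L) atBot atTop)
    {m : ℝ} (hm : 0 < m) :
    ∃ X : ℝ, 1 ≤ X ∧ (∀ x z, X ≤ x → x ≤ z → L z - L x ≤ -(m * (z - x))) ∧
      (∀ x z, x ≤ -X → z ≤ x → L z - L x ≤ m * (z - x)) := by
  obtain ⟨X₁, hX₁⟩ := eventually_atTop.mp (htop.eventually (eventually_le_atBot (-m)))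
  obtain ⟨X₂, hX₂⟩ := eventually_atBot.mp (hbot.eventually (eventually_ge_atTop m))
  refine ⟨max 1 (max X₁ (-X₂)), le_max_left _ _, ?_, ?_⟩
  · -- right tail
    have hanti : AntitoneOn (fun t => L t + m * t) (Set.Ici (max 1 (max X₁ (-X₂)))) := by
      have hdiff : ∀ t ∈ interior (Set.Ici (max 1 (max X₁ (-X₂)))), DifferentiableAt ℝ L t := by
        intro t ht
        rw [interior_Ici] at ht
        have htX₁ : X₁ ≤ t :=
          le_of_lt (lt_of_le_of_lt (le_trans (le_max_left _ _) (le_max_right _ _)) ht)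
        by_contra hnd
        have h0 := deriv_zero_of_not_differentiableAt hnd
        have := hX₁ t htX₁
        rw [h0] at this; linarith
      refine antitoneOn_of_deriv_nonpos (convex_Ici _)
        ((hcont.add (continuous_const.mul continuous_id)).continuousOn)
        (fun t ht => ((hdiff t ht).add ((differentiableAt_id.const_mul m))).differentiableWithinAt)
        (fun t ht => ?_)
      have htX₁ : X₁ ≤ t := by
        rw [interior_Ici] at ht
        exact le_of_lt (lt_of_le_of_lt (le_trans (le_max_left _ _) (le_max_right _ _)) ht)
      have hd := hdiff t ht
      have : deriv (fun t => L t + m * t) t = deriv L t + m := by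
        rw [deriv_fun_add hd (show DifferentiableAt ℝ (fun y : ℝ => m * y) t from differentiableAt_id.const_mul m), deriv_const_mul m (show DifferentiableAt ℝ (fun y : ℝ => y) t from differentiableAt_id),
          deriv_id'']
        ring
      rw [this]
      have := hX₁ t htX₁
      linarith
    intro x z hx hz
    have h1 := hanti (Set.mem_Ici.mpr hx) (Set.mem_Ici.mpr (le_trans hx hz)) hz
    simp only at h1
    linarith
  · -- left tail
    have hmono : MonotoneOn (fun t => L t - m * t) (Set.Iic (-max 1 (max X₁ (-X₂)))) := by
      have hdiff : ∀ t ∈ interior (Set.Iic (-max 1 (max X₁ (-X₂)))), DifferentiableAt ℝ L t := by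
        intro t ht
        rw [interior_Iic] at ht
        have htX₂ : t ≤ X₂ := by
          have h2 : -X₂ ≤ max 1 (max X₁ (-X₂)) :=
            le_trans (le_max_right X₁ (-X₂)) (le_max_right 1 (max X₁ (-X₂)))
          have h3 := le_of_lt (Set.mem_Iio.mp ht)
          linarith
        by_contra hnd
        have h0 := deriv_zero_of_not_differentiableAt hnd
        have := hX₂ t htX₂
        rw [h0] at this; linarith
      refine monotoneOn_of_deriv_nonneg (convex_Iic _)
        ((hcont.sub (continuous_const.mul continuous_id)).continuousOn)
        (fun t ht => ((hdiff t ht).sub ((differentiableAt_id.const_mul m))).differentiableWithinAt)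
        (fun t ht => ?_)
      have htX₂ : t ≤ X₂ := by
        rw [interior_Iic] at ht
        have h2 : -X₂ ≤ max 1 (max X₁ (-X₂)) :=
          le_trans (le_max_right X₁ (-X₂)) (le_max_right 1 (max X₁ (-X₂)))
        have h3 := le_of_lt (Set.mem_Iio.mp ht)
        linarith
      have hd := hdiff t ht
      have : deriv (fun t => L t - m * t) t = deriv L t - m := by
        rw [deriv_fun_sub hd (show DifferentiableAt ℝ (fun y : ℝ => m * y) t from differentiableAt_id.const_mul m), deriv_const_mul m (show DifferentiableAt ℝ (fun y : ℝ => y) t from differentiableAt_id),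
          deriv_id'']
        ring
      rw [this]
      have := hX₂ t htX₂
      linarith
    intro x z hx hz
    have h1 := hmono (Set.mem_Iic.mpr (le_trans hz hx)) (Set.mem_Iic.mpr hx) hz
    simp only at h1
    linarith

lemma integrable_exp_neg_abs : MeasureTheory.Integrable fun x : ℝ => Real.exp (-|x|) := by
  have h1 : IntegrableOn (fun x : ℝ => Real.exp (-|x|)) (Set.Iic 0) := by
    refine ((integrableOn_exp_Iic 0).congr_fun (fun x hx => ?_) measurableSet_Iic)
    rw [abs_of_nonpos (Set.mem_Iic.mp hx), neg_neg]
  have h2 : IntegrableOn (fun x : ℝ => Real.exp (-|x|)) (Set.Ioi 0) := by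
    refine ((exp_neg_integrableOn_Ioi 0 one_pos).congr_fun (fun x hx => ?_) measurableSet_Ioi)
    rw [abs_of_pos (Set.mem_Ioi.mp hx)]; simp
  have h3 := h1.union h2
  rw [Set.Iic_union_Ioi] at h3
  exact integrableOn_univ.mp h3

end Stmt12Aux

set_option maxHeartbeats 1600000 in
/-- **Proposition.** If `log ρ ∈ S^{n_ρ}` and `f ∈ S^{n_f}`, then
`f̂ ∈ S^{min(n_f+2, n_ρ+1)}`. -/
theorem stmt12 (ρ : ℝ → ℝ) (hmeas : Measurable ρ) (hpos : ∀ x, 0 < ρ x)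
    (hint : ∫ x, ρ x = 1) (htail : SuperExpTails ρ)
    (l : ℝ) (hl : 0 < l)
    (nρ nf : ℕ) (hlog : MemS nρ fun x => Real.log (ρ x))
    (f : ℝ → ℝ) (hf : MemS nf f) :
    MemS (min (nf + 2) (nρ + 1)) (fhat ρ l f) := by
  classical
  obtain ⟨htop, hbot⟩ := htail
  have hLcd : ContDiff ℝ (nρ : ℕ) (fun x => Real.log (ρ x)) := hlog.1
  set L : ℝ → ℝ := fun x => Real.log (ρ x) with hLdef
  have hLcont : Continuous L := hLcd.continuous
  have hρL : ∀ x, ρ x = Real.exp (L x) := fun x => (Real.exp_log (hpos x)).symm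
  have hρfun : ρ = fun x => Real.exp (L x) := funext hρL
  have hρcont : Continuous ρ := by rw [hρfun]; exact Real.continuous_exp.comp hLcont
  have hfcont : Continuous f := hf.1.continuous
  have htop' : Tendsto (deriv L) atTop atBot := htop
  have hbot' : Tendsto (deriv L) atBot atTop := hbot
  have hSEf : ∀ i ≤ nf, Stmt12Aux.SE (iteratedDeriv i f) :=
    fun i hi => Stmt12Aux.SE_of_bddAbove (fun s hs => hf.2 s hs i hi)
  have hSEL : ∀ i ≤ nρ, Stmt12Aux.SE (iteratedDeriv i L) :=
    fun i hi => Stmt12Aux.SE_of_bddAbove (fun s hs => hlog.2 s hs i hi)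
  have hSEf0 : Stmt12Aux.SE f := by
    have h := hSEf 0 (Nat.zero_le _)
    rwa [iteratedDeriv_zero] at h
  -- positivity of the constant h(l)
  have hcdfpos : ∀ t : ℝ, 0 < stdCDF t := by
    intro t
    have hne : (gaussianReal 0 1) (Set.Iic t) ≠ 0 := by
      intro h0
      have hac := gaussianReal_absolutelyContinuous' 0 (v := 1) (by norm_num)
      have h1 := hac h0
      rw [Real.volume_Iic] at h1
      exact (by simp : (⊤ : ENNReal) ≠ 0) h1
    exact ENNReal.toReal_pos hne (measure_ne_top _ _)
  have hcpos : 0 < hc ρ l := by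
    have h := hcdfpos (-(l * Real.sqrt (Jc ρ)) / 2)
    have hl' : l ≠ 0 := ne_of_gt hl
    unfold hc
    positivity
  have hcne : hc ρ l ≠ 0 := ne_of_gt hcpos
  -- global density bound
  have hρb : ∀ m : ℝ, 0 < m → ∃ C : ℝ, 0 < C ∧ ∀ x, ρ x ≤ C * Real.exp (-(m * |x|)) := by
    intro m hm
    obtain ⟨X, hX1, hXr, hXl⟩ := Stmt12Aux.decay hLcont htop' hbot' hm
    obtain ⟨B, hB⟩ := isCompact_Icc.exists_bound_of_continuousOn
      (hρcont.continuousOn : ContinuousOn ρ (Set.Icc (-X) X))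
    have hX0 : (0:ℝ) < X := lt_of_lt_of_le one_pos hX1
    have hBnn : 0 ≤ B := le_trans (norm_nonneg _) (hB X ⟨by linarith, le_rfl⟩)
    refine ⟨max (max (Real.exp (L X + m * X)) (Real.exp (L (-X) + m * X)))
      (B * Real.exp (m * X) + 1), ?_, ?_⟩
    · exact lt_of_lt_of_le (Real.exp_pos _) (le_trans (le_max_left _ _) (le_max_left _ _))
    intro x
    rcases le_total X x with hx | hx
    · have h1 := hXr X x le_rfl hx
      have h2 : L x ≤ L X + m * X + -(m * x) := by linarith
      have h3 : |x| = x := abs_of_pos (by linarith)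
      calc ρ x = Real.exp (L x) := hρL x
        _ ≤ Real.exp (L X + m * X + -(m * x)) := Real.exp_le_exp.mpr h2
        _ = Real.exp (L X + m * X) * Real.exp (-(m * x)) := Real.exp_add _ _
        _ ≤ max (max (Real.exp (L X + m * X)) (Real.exp (L (-X) + m * X)))
            (B * Real.exp (m * X) + 1) * Real.exp (-(m * |x|)) := by
            rw [h3]
            exact mul_le_mul_of_nonneg_right
              (le_trans (le_max_left _ _) (le_max_left _ _)) (Real.exp_nonneg _)
    rcases le_total x (-X) with hx' | hx'
    · have h1 := hXl (-X) x le_rfl hx'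
      have h2 : L x ≤ L (-X) + m * X + m * x := by nlinarith [h1]
      have h3 : |x| = -x := abs_of_nonpos (by linarith)
      calc ρ x = Real.exp (L x) := hρL x
        _ ≤ Real.exp (L (-X) + m * X + m * x) := Real.exp_le_exp.mpr h2
        _ = Real.exp (L (-X) + m * X) * Real.exp (m * x) := Real.exp_add _ _
        _ ≤ max (max (Real.exp (L X + m * X)) (Real.exp (L (-X) + m * X)))
            (B * Real.exp (m * X) + 1) * Real.exp (-(m * |x|)) := by
            rw [h3]
            have : -(m * -x) = m * x := by ring
            rw [this]
            exact mul_le_mul_of_nonneg_right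
              (le_trans (le_max_right _ _) (le_max_left _ _)) (Real.exp_nonneg _)
    · have hmem : x ∈ Set.Icc (-X) X := ⟨hx', hx⟩
      have h1 : ρ x ≤ B := le_trans (le_abs_self _) (hB x hmem)
      have h2 : Real.exp (-(m * X)) ≤ Real.exp (-(m * |x|)) := by
        apply Real.exp_le_exp.mpr
        have : |x| ≤ X := abs_le.mpr ⟨hx', hx⟩
        nlinarith
      calc ρ x ≤ B := h1
        _ = B * Real.exp (m * X) * Real.exp (-(m * X)) := by
            rw [mul_assoc, ← Real.exp_add]; simp
        _ ≤ (B * Real.exp (m * X) + 1) * Real.exp (-(m * |x|)) := by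
            apply mul_le_mul (by linarith) h2 (Real.exp_nonneg _) (by positivity)
        _ ≤ _ := mul_le_mul_of_nonneg_right (le_max_right _ _) (Real.exp_nonneg _)
  -- integrability of exp(s|x|) ρ
  have hint_s : ∀ s : ℝ, Integrable fun x => Real.exp (s * |x|) * ρ x := by
    intro s
    obtain ⟨C, hCpos, hC⟩ := hρb (|s| + 1) (by positivity)
    apply Integrable.mono (Stmt12Aux.integrable_exp_neg_abs.const_mul C)
    · exact ((Real.continuous_exp.comp (continuous_const.mul continuous_abs)).measurable.mul
        hmeas).aestronglyMeasurable
    · apply ae_of_all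
      intro x
      rw [Real.norm_eq_abs, Real.norm_eq_abs]
      have h0 : 0 < Real.exp (s * |x|) * ρ x := mul_pos (Real.exp_pos _) (hpos x)
      rw [abs_of_pos h0, abs_of_pos (mul_pos hCpos (Real.exp_pos _))]
      calc Real.exp (s * |x|) * ρ x
          ≤ Real.exp (s * |x|) * (C * Real.exp (-((|s| + 1) * |x|))) :=
            mul_le_mul_of_nonneg_left (hC x) (Real.exp_nonneg _)
        _ = C * Real.exp (s * |x| + -((|s| + 1) * |x|)) := by
            rw [Real.exp_add]; ring
        _ ≤ C * Real.exp (-|x|) := by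
            apply mul_le_mul_of_nonneg_left _ hCpos.le
            apply Real.exp_le_exp.mpr
            have h1 : s * |x| ≤ |s| * |x| := mul_le_mul_of_nonneg_right (le_abs_self s) (abs_nonneg x)
            nlinarith
  have hρint : Integrable ρ := by
    have h := hint_s 0
    simpa using h
  have hfρint : Integrable fun x => f x * ρ x := by
    obtain ⟨C, hC⟩ := hSEf0 1 one_pos
    have hCnn : 0 ≤ C := Stmt12Aux.SE_bound_nonneg hC
    apply Integrable.mono ((hint_s 1).const_mul C)
    · exact (hfcont.measurable.mul hmeas).aestronglyMeasurable
    · apply ae_of_all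
      intro x
      rw [Real.norm_eq_abs, Real.norm_eq_abs, abs_mul, abs_of_pos (hpos x)]
      have h1 : |f x| * ρ x ≤ C * Real.exp (1 * |x|) * ρ x :=
        mul_le_mul_of_nonneg_right (by simpa using hC x) (hpos x).le
      have h2 : 0 ≤ C * (Real.exp (1 * |x|) * ρ x) :=
        mul_nonneg hCnn (mul_nonneg (Real.exp_nonneg _) (hpos x).le)
      rw [abs_of_nonneg h2]
      linarith [h1]
  -- the Poisson-equation objects
  set cf : ℝ := rhoE ρ f with hcfdef
  set φ : ℝ → ℝ := fun z => ρ z * (cf - f z) with hφdef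
  have hφcont : Continuous φ := hρcont.mul (continuous_const.sub hfcont)
  have hφint : Integrable φ := by
    have h1 : Integrable fun z => cf * ρ z - f z * ρ z := (hρint.const_mul cf).sub hfρint
    exact h1.congr (ae_of_all _ fun z => by simp only [hφdef]; ring)
  have hφtotal : ∫ z, φ z = 0 := by
    have h1 : ∫ z, φ z = ∫ z, (cf * ρ z - f z * ρ z) := by
      congr 1; funext z; rw [hφdef]; ring
    rw [h1, integral_sub (hρint.const_mul cf) hfρint, MeasureTheory.integral_const_mul, hint]
    have h2 : ∫ z, f z * ρ z = cf := by rw [hcfdef]; rfl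
    rw [h2]; ring
  set I : ℝ → ℝ := fun x => ∫ z in Set.Iic x, φ z with hIdef
  have hIderiv : ∀ x, HasDerivAt I (φ x) x := by
    have hIeq : I = fun x => I 0 + ∫ z in (0:ℝ)..x, φ z := by
      funext x
      have h := intervalIntegral.integral_Iic_sub_Iic (μ := volume) (a := (0:ℝ)) (b := x)
        hφint.integrableOn hφint.integrableOn
      simp only [hIdef]
      linarith [h]
    intro x
    rw [hIeq]
    exact ((intervalIntegral.integral_hasDerivAt_right hφint.intervalIntegrable
      (hφcont.stronglyMeasurable.stronglyMeasurableAtFilter) hφcont.continuousAt).const_add (I 0))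
  have hIcont : Continuous I :=
    continuous_iff_continuousAt.mpr fun x => (hIderiv x).continuousAt
  set u : ℝ → ℝ := fun x => 2 / (hc ρ l * ρ x) * I x with hudef
  have hueq : u = fun x => 2 / hc ρ l * (Real.exp (-(L x)) * I x) := by
    funext x
    simp only [hudef]
    have h1 : ρ x ≠ 0 := ne_of_gt (hpos x)
    have h2 : Real.exp (L x) ≠ 0 := Real.exp_ne_zero _
    rw [hρL x, Real.exp_neg]
    field_simp
  have hucont : Continuous u := by
    rw [hueq]
    exact continuous_const.mul ((hLcont.neg.rexp).mul hIcont)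
  have hfhat_eq : fhat ρ l f = fun x => ∫ y in (0:ℝ)..x, u y := rfl
  have hfhat_deriv : ∀ x, HasDerivAt (fhat ρ l f) (u x) x := by
    intro x
    rw [hfhat_eq]
    exact intervalIntegral.integral_hasDerivAt_right (hucont.intervalIntegrable 0 x)
      (hucont.stronglyMeasurable.stronglyMeasurableAtFilter) hucont.continuousAt
  have hfhat_deriv_eq : deriv (fhat ρ l f) = u := funext fun x => (hfhat_deriv x).deriv
  -- the main growth bound for u
  have hSEu : Stmt12Aux.SE u := by
    intro s hs
    obtain ⟨D₀, hD₀⟩ := hSEf0 s hs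
    have hD : ∀ z, |cf - f z| ≤ (|cf| + D₀) * Real.exp (s * |z|) := by
      intro z
      have h1 : (1:ℝ) ≤ Real.exp (s * |z|) := Real.one_le_exp (by positivity)
      have h2 := hD₀ z
      calc |cf - f z| ≤ |cf| + |f z| := abs_sub _ _
        _ ≤ |cf| * Real.exp (s * |z|) + D₀ * Real.exp (s * |z|) := by
            have h3 : |cf| ≤ |cf| * Real.exp (s * |z|) :=
              le_mul_of_one_le_right (abs_nonneg _) h1
            exact add_le_add h3 h2
        _ = (|cf| + D₀) * Real.exp (s * |z|) := by ring
    set D : ℝ := |cf| + D₀ with hDdef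
    have hDnn : 0 ≤ D := Stmt12Aux.SE_bound_nonneg hD
    obtain ⟨X, hX1, hXr, hXl⟩ := Stmt12Aux.decay hLcont htop' hbot' (by linarith : (0:ℝ) < s + 1)
    have hright : ∀ x : ℝ, X ≤ x → |u x| ≤ 2 / hc ρ l * D * Real.exp (s * |x|) := by
      intro x hx
      have hx1 : (1:ℝ) ≤ x := le_trans hX1 hx
      have hxabs : |x| = x := abs_of_pos (by linarith)
      have hpt : ∀ z ∈ Set.Ioi x, ‖φ z‖ ≤ D * ρ x * Real.exp (s * x) * Real.exp (x - z) := by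
        intro z hz
        have hzx : x ≤ z := le_of_lt hz
        have hzabs : |z| = z := abs_of_pos (by linarith)
        have h1 : ρ z ≤ ρ x * Real.exp (-((s + 1) * (z - x))) := by
          have h2 := hXr x z hx hzx
          have h3 : L z ≤ L x + -((s + 1) * (z - x)) := by linarith
          calc ρ z = Real.exp (L z) := hρL z
            _ ≤ Real.exp (L x + -((s + 1) * (z - x))) := Real.exp_le_exp.mpr h3
            _ = ρ x * Real.exp (-((s + 1) * (z - x))) := by rw [Real.exp_add, hρL x]
        have h4 : ‖φ z‖ = ρ z * |cf - f z| := by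
          simp only [Real.norm_eq_abs, hφdef]
          rw [abs_mul, abs_of_pos (hpos z)]
        have h5 : |cf - f z| ≤ D * Real.exp (s * z) := by
          have := hD z; rwa [hzabs] at this
        have hexps : Real.exp (-((s + 1) * (z - x))) * Real.exp (s * z)
            = Real.exp (s * x) * Real.exp (x - z) := by
          rw [← Real.exp_add, ← Real.exp_add]; congr 1; ring
        calc ‖φ z‖ = ρ z * |cf - f z| := h4
          _ ≤ (ρ x * Real.exp (-((s + 1) * (z - x)))) * (D * Real.exp (s * z)) :=
              mul_le_mul h1 h5 (abs_nonneg _)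
                (mul_nonneg (hpos x).le (Real.exp_nonneg _))
          _ = D * ρ x * (Real.exp (-((s + 1) * (z - x))) * Real.exp (s * z)) := by ring
          _ = D * ρ x * (Real.exp (s * x) * Real.exp (x - z)) := by rw [hexps]
          _ = D * ρ x * Real.exp (s * x) * Real.exp (x - z) := by ring
      have hbint : IntegrableOn (fun z => D * ρ x * Real.exp (s * x) * Real.exp (x - z))
          (Set.Ioi x) := by
        have h5 : IntegrableOn (fun z : ℝ => Real.exp (-(1:ℝ) * z)) (Set.Ioi x) :=
          exp_neg_integrableOn_Ioi x one_pos
        have h6 : IntegrableOn (fun z : ℝ => Real.exp (x - z)) (Set.Ioi x) := by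
          refine MeasureTheory.IntegrableOn.congr_fun (h5.const_mul (Real.exp x))
            (fun z _ => ?_) measurableSet_Ioi
          rw [← Real.exp_add]; congr 1; ring
        exact h6.const_mul _
      have hval : ∫ z in Set.Ioi x, D * ρ x * Real.exp (s * x) * Real.exp (x - z)
          = D * ρ x * Real.exp (s * x) := by
        rw [MeasureTheory.integral_const_mul]
        have h7 : ∀ z : ℝ, Real.exp (x - z) = Real.exp x * Real.exp (-z) := by
          intro z; rw [← Real.exp_add]; ring_nf
        simp_rw [h7]
        rw [MeasureTheory.integral_const_mul, integral_exp_neg_Ioi, ← Real.exp_add]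
        simp
      have hIbound : |I x| ≤ D * ρ x * Real.exp (s * x) := by
        have h0 : I x = -∫ z in Set.Ioi x, φ z := by
          have hsplit := intervalIntegral.integral_Iic_add_Ioi (μ := volume) (b := x)
            hφint.integrableOn hφint.integrableOn
          rw [hφtotal] at hsplit
          simp only [hIdef]
          linarith
        rw [h0, abs_neg]
        calc |∫ z in Set.Ioi x, φ z| ≤ ∫ z in Set.Ioi x, ‖φ z‖ := by
              rw [← Real.norm_eq_abs]; exact norm_integral_le_integral_norm _
          _ ≤ ∫ z in Set.Ioi x, D * ρ x * Real.exp (s * x) * Real.exp (x - z) :=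
              setIntegral_mono_on hφint.norm.integrableOn hbint measurableSet_Ioi hpt
          _ = D * ρ x * Real.exp (s * x) := hval
      have h8 : |u x| = 2 / (hc ρ l * ρ x) * |I x| := by
        simp only [hudef]
        rw [abs_mul, abs_of_pos (div_pos two_pos (mul_pos hcpos (hpos x)))]
      rw [h8, hxabs]
      calc 2 / (hc ρ l * ρ x) * |I x|
          ≤ 2 / (hc ρ l * ρ x) * (D * ρ x * Real.exp (s * x)) :=
            mul_le_mul_of_nonneg_left hIbound
              (le_of_lt (div_pos two_pos (mul_pos hcpos (hpos x))))
        _ = 2 / hc ρ l * D * Real.exp (s * x) := by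
            have hρx : ρ x ≠ 0 := ne_of_gt (hpos x)
            field_simp
    have hleft : ∀ x : ℝ, x ≤ -X → |u x| ≤ 2 / hc ρ l * D * Real.exp (s * |x|) := by
      intro x hx
      have hx1 : x ≤ -1 := le_trans hx (by linarith)
      have hxabs : |x| = -x := abs_of_neg (by linarith)
      have hpt : ∀ z ∈ Set.Iic x, ‖φ z‖ ≤ D * ρ x * Real.exp (-(s * x)) * Real.exp (z - x) := by
        intro z hz
        have hzx : z ≤ x := hz
        have hzabs : |z| = -z := abs_of_neg (by linarith)
        have h1 : ρ z ≤ ρ x * Real.exp ((s + 1) * (z - x)) := by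
          have h2 := hXl x z hx hzx
          have h3 : L z ≤ L x + (s + 1) * (z - x) := by linarith
          calc ρ z = Real.exp (L z) := hρL z
            _ ≤ Real.exp (L x + (s + 1) * (z - x)) := Real.exp_le_exp.mpr h3
            _ = ρ x * Real.exp ((s + 1) * (z - x)) := by rw [Real.exp_add, hρL x]
        have h4 : ‖φ z‖ = ρ z * |cf - f z| := by
          simp only [Real.norm_eq_abs, hφdef]
          rw [abs_mul, abs_of_pos (hpos z)]
        have h5 : |cf - f z| ≤ D * Real.exp (s * -z) := by
          have := hD z; rwa [hzabs] at this
        have hexps : Real.exp ((s + 1) * (z - x)) * Real.exp (s * -z)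
            = Real.exp (-(s * x)) * Real.exp (z - x) := by
          rw [← Real.exp_add, ← Real.exp_add]; congr 1; ring
        calc ‖φ z‖ = ρ z * |cf - f z| := h4
          _ ≤ (ρ x * Real.exp ((s + 1) * (z - x))) * (D * Real.exp (s * -z)) :=
              mul_le_mul h1 h5 (abs_nonneg _)
                (mul_nonneg (hpos x).le (Real.exp_nonneg _))
          _ = D * ρ x * (Real.exp ((s + 1) * (z - x)) * Real.exp (s * -z)) := by ring
          _ = D * ρ x * (Real.exp (-(s * x)) * Real.exp (z - x)) := by rw [hexps]
          _ = D * ρ x * Real.exp (-(s * x)) * Real.exp (z - x) := by ring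
      have hbint : IntegrableOn (fun z => D * ρ x * Real.exp (-(s * x)) * Real.exp (z - x))
          (Set.Iic x) := by
        have h6 : IntegrableOn (fun z : ℝ => Real.exp (z - x)) (Set.Iic x) := by
          refine MeasureTheory.IntegrableOn.congr_fun
            ((integrableOn_exp_Iic x).const_mul (Real.exp (-x)))
            (fun z _ => ?_) measurableSet_Iic
          rw [← Real.exp_add]; congr 1; ring
        exact h6.const_mul _
      have hval : ∫ z in Set.Iic x, D * ρ x * Real.exp (-(s * x)) * Real.exp (z - x)
          = D * ρ x * Real.exp (-(s * x)) := by
        rw [MeasureTheory.integral_const_mul]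
        have h7 : ∀ z : ℝ, Real.exp (z - x) = Real.exp (-x) * Real.exp z := by
          intro z; rw [← Real.exp_add]; congr 1; ring
        simp_rw [h7]
        rw [MeasureTheory.integral_const_mul, integral_exp_Iic, ← Real.exp_add]
        simp
      have hIbound : |I x| ≤ D * ρ x * Real.exp (-(s * x)) := by
        calc |I x| ≤ ∫ z in Set.Iic x, ‖φ z‖ := by
              rw [← Real.norm_eq_abs]; exact norm_integral_le_integral_norm _
          _ ≤ ∫ z in Set.Iic x, D * ρ x * Real.exp (-(s * x)) * Real.exp (z - x) :=
              setIntegral_mono_on hφint.norm.integrableOn hbint measurableSet_Iic hpt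
          _ = D * ρ x * Real.exp (-(s * x)) := hval
      have h8 : |u x| = 2 / (hc ρ l * ρ x) * |I x| := by
        simp only [hudef]
        rw [abs_mul, abs_of_pos (div_pos two_pos (mul_pos hcpos (hpos x)))]
      rw [h8, hxabs]
      have h9 : s * -x = -(s * x) := by ring
      rw [h9]
      calc 2 / (hc ρ l * ρ x) * |I x|
          ≤ 2 / (hc ρ l * ρ x) * (D * ρ x * Real.exp (-(s * x))) :=
            mul_le_mul_of_nonneg_left hIbound
              (le_of_lt (div_pos two_pos (mul_pos hcpos (hpos x))))
        _ = 2 / hc ρ l * D * Real.exp (-(s * x)) := by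
            have hρx : ρ x ≠ 0 := ne_of_gt (hpos x)
            field_simp
    obtain ⟨B, hB⟩ := isCompact_Icc.exists_bound_of_continuousOn
      (hucont.continuousOn : ContinuousOn u (Set.Icc (-X) X))
    have hX0 : (0:ℝ) < X := lt_of_lt_of_le one_pos hX1
    have hBnn : 0 ≤ B := le_trans (norm_nonneg _) (hB 0 ⟨by linarith, by linarith⟩)
    refine ⟨max (2 / hc ρ l * D) B, fun x => ?_⟩
    rcases le_total X x with hx | hx
    · exact le_trans (hright x hx)
        (mul_le_mul_of_nonneg_right (le_max_left _ _) (Real.exp_nonneg _))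
    rcases le_total x (-X) with hx' | hx'
    · exact le_trans (hleft x hx')
        (mul_le_mul_of_nonneg_right (le_max_left _ _) (Real.exp_nonneg _))
    · have h1 : |u x| ≤ B := by
        have := hB x ⟨hx', hx⟩
        rwa [Real.norm_eq_abs] at this
      have h2 : (1:ℝ) ≤ Real.exp (s * |x|) := Real.one_le_exp (by positivity)
      have h3 : 0 ≤ max (2 / hc ρ l * D) B := le_trans hBnn (le_max_right _ _)
      calc |u x| ≤ B := h1
        _ ≤ max (2 / hc ρ l * D) B := le_max_right _ _
        _ = max (2 / hc ρ l * D) B * 1 := (mul_one _).symm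
        _ ≤ max (2 / hc ρ l * D) B * Real.exp (s * |x|) :=
            mul_le_mul_of_nonneg_left h2 h3
    -- smoothness
  set M : ℕ := min nρ (nf + 1) with hMdef
  have hnM : min (nf + 2) (nρ + 1) = M + 1 := by omega
  have hφeq : φ = fun z => Real.exp (L z) * (cf - f z) := by
    funext z; simp only [hφdef]; rw [hρL z]
  have hφcd : ContDiff ℝ (min nρ nf : ℕ) φ := by
    rw [hφeq]
    exact ((hLcd.of_le (by exact_mod_cast Nat.min_le_left nρ nf)).exp).mul
      (contDiff_const.sub (hf.1.of_le (by exact_mod_cast Nat.min_le_right nρ nf)))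
  have hderivI : deriv I = φ := funext fun x => (hIderiv x).deriv
  have hIcd : ContDiff ℝ ((min nρ nf + 1 : ℕ)) I := by
    rw [show (((min nρ nf + 1 : ℕ)) : WithTop ℕ∞) = ((min nρ nf : ℕ) : WithTop ℕ∞) + 1 by
      push_cast; rfl]
    refine contDiff_succ_iff_deriv.mpr ⟨fun x => (hIderiv x).differentiableAt, ?_, ?_⟩
    · intro hω; exact absurd hω (by simp)
    · rw [hderivI]; exact hφcd
  have hucd : ContDiff ℝ (M : ℕ) u := by
    rw [hueq]
    refine contDiff_const.mul ((((hLcd.of_le ?_).neg).exp).mul (hIcd.of_le ?_))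
    · exact_mod_cast (by omega : M ≤ nρ)
    · exact_mod_cast (by omega : M ≤ min nρ nf + 1)
  have hfhatcd : ContDiff ℝ ((M + 1 : ℕ)) (fhat ρ l f) := by
    rw [show (((M + 1 : ℕ)) : WithTop ℕ∞) = ((M : ℕ) : WithTop ℕ∞) + 1 by push_cast; rfl]
    refine contDiff_succ_iff_deriv.mpr ⟨fun x => (hfhat_deriv x).differentiableAt, ?_, ?_⟩
    · intro hω; exact absurd hω (by simp)
    · rw [hfhat_deriv_eq]; exact hucd
  -- the differential identity for u
  have huderiv : 1 ≤ nρ → ∀ x, HasDerivAt u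
      (2 / hc ρ l * (cf - f x) - deriv L x * u x) x := by
    intro hnρ1 x
    have hLd : DifferentiableAt ℝ L x :=
      ((hLcd.of_le (by exact_mod_cast hnρ1 : (1 : WithTop ℕ∞) ≤ (nρ : ℕ))).differentiable
        one_ne_zero) x
    have h1 : HasDerivAt (fun y => Real.exp (-(L y))) (Real.exp (-(L x)) * -(deriv L x)) x :=
      (hLd.hasDerivAt.neg).exp
    have h2 := (h1.mul (hIderiv x)).const_mul (2 / hc ρ l)
    change HasDerivAt (fun y => 2 / hc ρ l * (Real.exp (-(L y)) * I y)) _ x at h2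
    rw [← hueq] at h2
    have hexp : Real.exp (-(L x)) * Real.exp (L x) = 1 := by rw [← Real.exp_add]; simp
    have hφx : φ x = Real.exp (L x) * (cf - f x) := by simp only [hφdef]; rw [hρL x]
    have hux : u x = 2 / hc ρ l * (Real.exp (-(L x)) * I x) := by rw [hueq]
    have hval : 2 / hc ρ l * (cf - f x) - deriv L x * u x
        = 2 / hc ρ l * (Real.exp (-(L x)) * -(deriv L x) * I x + Real.exp (-(L x)) * φ x) := by
      rw [hφx, hux]
      linear_combination (-(2 / hc ρ l * (cf - f x))) * hexp
    rw [hval]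
    exact h2
  have huderiv_eq : 1 ≤ nρ → deriv u = fun x => 2 / hc ρ l * (cf - f x) - deriv L x * u x :=
    fun h => funext fun x => (huderiv h x).deriv
  -- growth bounds for all iterated derivatives of u
  have hSEuk : ∀ k : ℕ, k ≤ M → Stmt12Aux.SE (iteratedDeriv k u) := by
    intro k
    induction k using Nat.strong_induction_on with
    | _ k ih =>
      cases k with
      | zero => intro _; rw [iteratedDeriv_zero]; exact hSEu
      | succ k =>
        intro hk1
        have hkM : k ≤ M := by omega
        have hk1nρ : k + 1 ≤ nρ := by omega
        have hknf : k ≤ nf := by omega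
        have hnρ1 : 1 ≤ nρ := by omega
        rw [iteratedDeriv_succ', huderiv_eq hnρ1]
        have hfk : ContDiff ℝ (k : ℕ) f := hf.1.of_le (by exact_mod_cast hknf)
        have hg₁cd : ContDiff ℝ (k : ℕ) (fun x => 2 / hc ρ l * (cf - f x)) :=
          contDiff_const.mul (contDiff_const.sub hfk)
        have hLdk : ContDiff ℝ (k : ℕ) (deriv L) := by
          have hLk1 : ContDiff ℝ ((k + 1 : ℕ)) L := hLcd.of_le (by exact_mod_cast hk1nρ)
          rw [show (((k + 1 : ℕ)) : WithTop ℕ∞) = ((k : ℕ) : WithTop ℕ∞) + 1 by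
            push_cast; rfl] at hLk1
          exact (contDiff_succ_iff_deriv.mp hLk1).2.2
        have hucdk : ContDiff ℝ (k : ℕ) u := hucd.of_le (by exact_mod_cast hkM)
        have hg₂cd : ContDiff ℝ (k : ℕ) (fun x => deriv L x * u x) := hLdk.mul hucdk
        have hSE₁ : Stmt12Aux.SE (iteratedDeriv k (fun x => 2 / hc ρ l * (cf - f x))) := by
          have hbase : Stmt12Aux.SE (iteratedDeriv k (fun x => cf - f x)) := by
            have h1 : ∀ x, iteratedDeriv k (fun x => cf - f x) x
                = iteratedDeriv k (fun _ => cf) x - iteratedDeriv k f x :=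
              Stmt12Aux.itd_sub contDiff_const hfk
            have h2 : Stmt12Aux.SE (iteratedDeriv k (fun _ : ℝ => cf)) := by
              rw [Stmt12Aux.itd_const]
              exact Stmt12Aux.SE_const _
            exact Stmt12Aux.SE_congr (fun x => (h1 x).symm) (h2.sub (hSEf k hknf))
          have h3 : ∀ x, iteratedDeriv k (fun x => 2 / hc ρ l * (cf - f x)) x
              = 2 / hc ρ l * iteratedDeriv k (fun x => cf - f x) x :=
            Stmt12Aux.itd_const_mul (contDiff_const.sub hfk) (2 / hc ρ l)
          exact Stmt12Aux.SE_congr (fun x => (h3 x).symm) (hbase.const_mul _)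
        have hSE₂ : Stmt12Aux.SE (iteratedDeriv k (fun x => deriv L x * u x)) := by
          refine Stmt12Aux.SE_itd_mul hLdk hucdk ?_ ?_
          · intro j hj
            have h4 : iteratedDeriv j (deriv L) = iteratedDeriv (j + 1) L :=
              (iteratedDeriv_succ').symm
            rw [h4]
            exact hSEL (j + 1) (by omega)
          · intro j hj
            exact ih j (by omega) (by omega)
        have h5 : ∀ x, iteratedDeriv k (fun x => 2 / hc ρ l * (cf - f x) - deriv L x * u x) x
            = iteratedDeriv k (fun x => 2 / hc ρ l * (cf - f x)) x
              - iteratedDeriv k (fun x => deriv L x * u x) x :=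
          Stmt12Aux.itd_sub hg₁cd hg₂cd
        exact Stmt12Aux.SE_congr (fun x => (h5 x).symm) (hSE₁.sub hSE₂)
  -- final assembly
  rw [hnM]
  refine ⟨hfhatcd, ?_⟩
  intro s hs i hi
  cases i with
  | zero =>
    rw [iteratedDeriv_zero]
    refine Stmt12Aux.bddAbove_of_SE ?_ hs
    intro s' hs'
    obtain ⟨C, hC⟩ := hSEu (s' / 2) (by linarith)
    have hCnn : 0 ≤ C := Stmt12Aux.SE_bound_nonneg hC
    refine ⟨2 * C / s', fun x => ?_⟩
    have hb1 : ∀ y ∈ Set.uIoc (0:ℝ) x, ‖u y‖ ≤ C * Real.exp (s' / 2 * |x|) := by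
      intro y hy
      have hyx : |y| ≤ |x| := by
        rcases Set.mem_uIoc.mp hy with ⟨h1, h2⟩ | ⟨h1, h2⟩
        · rw [abs_of_pos h1]
          exact le_trans h2 (le_abs_self x)
        · rw [abs_of_nonpos h2]
          have : -x ≤ |x| := neg_le_abs x
          linarith [h1]
      rw [Real.norm_eq_abs]
      calc |u y| ≤ C * Real.exp (s' / 2 * |y|) := hC y
        _ ≤ C * Real.exp (s' / 2 * |x|) :=
            mul_le_mul_of_nonneg_left (Real.exp_le_exp.mpr (by nlinarith)) hCnn
    have hb2 := intervalIntegral.norm_integral_le_of_norm_le_const hb1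
    have hfx : |fhat ρ l f x| ≤ C * Real.exp (s' / 2 * |x|) * |x| := by
      rw [hfhat_eq, ← Real.norm_eq_abs]
      simpa using hb2
    have habs : |x| ≤ 2 / s' * Real.exp (s' / 2 * |x|) := by
      have h6 : s' / 2 * |x| ≤ Real.exp (s' / 2 * |x|) := by
        have := Real.add_one_le_exp (s' / 2 * |x|); linarith
      calc |x| = 2 / s' * (s' / 2 * |x|) := by field_simp
        _ ≤ 2 / s' * Real.exp (s' / 2 * |x|) := mul_le_mul_of_nonneg_left h6 (by positivity)
    calc |fhat ρ l f x| ≤ C * Real.exp (s' / 2 * |x|) * |x| := hfx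
      _ ≤ C * Real.exp (s' / 2 * |x|) * (2 / s' * Real.exp (s' / 2 * |x|)) :=
          mul_le_mul_of_nonneg_left habs
            (mul_nonneg hCnn (Real.exp_nonneg _))
      _ = 2 * C / s' * (Real.exp (s' / 2 * |x|) * Real.exp (s' / 2 * |x|)) := by ring
      _ = 2 * C / s' * Real.exp (s' * |x|) := by rw [← Real.exp_add]; ring_nf
  | succ j =>
    have hjM : j ≤ M := by omega
    have h7 : iteratedDeriv (j + 1) (fhat ρ l f) = iteratedDeriv j u := by
      rw [iteratedDeriv_succ', hfhat_deriv_eq]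
    rw [h7]
    exact Stmt12Aux.bddAbove_of_SE (hSEuk j hjM) hs
end
end

section
/- There exists a constant C such that for all f ∈ S³, all d ∈ ℕ and all x = (x₁,…,x_d) ∈ ℝ^d: max{|G f(x₁)|, |G_d f(x)|} ≤ C·e^{|x₁|}·Σ_{i=1}^2 ‖f^{(i)}‖_{∞,1/2}. -/
open MeasureTheory ProbabilityTheory Filter Set

noncomputable section

/-! ### Auxiliary lemmas for `stmt13` -/

lemma aux_normIS_le {g : ℝ → ℝ} {s : ℝ}
    (h : BddAbove (Set.range fun x => Real.exp (-(s * |x|)) * |g x|)) (x : ℝ) :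
    |g x| ≤ normIS g s * Real.exp (s * |x|) := by
  have h1 : Real.exp (-(s * |x|)) * |g x| ≤ normIS g s := le_ciSup h x
  have h2 : (0:ℝ) < Real.exp (s * |x|) := Real.exp_pos _
  have := mul_le_mul_of_nonneg_right h1 h2.le
  rw [mul_comm (Real.exp (-(s * |x|))) (|g x|), mul_assoc, ← Real.exp_add] at this
  simpa using this

lemma aux_normIS_nonneg {g : ℝ → ℝ} {s : ℝ}
    (h : BddAbove (Set.range fun x => Real.exp (-(s * |x|)) * |g x|)) :
    0 ≤ normIS g s :=
  le_trans (by positivity) (le_ciSup h 0 : Real.exp (-(s * |0|)) * |g 0| ≤ normIS g s)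

lemma aux_min_exp_lip (a b : ℝ) : |min 1 (Real.exp a) - min 1 (Real.exp b)| ≤ |a - b| := by
  have key : ∀ u v : ℝ, v ≤ u → min 1 (Real.exp u) - min 1 (Real.exp v) ≤ u - v := by
    intro u v huv
    rcases le_or_gt (Real.exp u) 1 with h1 | h1
    · rw [min_eq_right h1, min_eq_right ((Real.exp_le_exp.2 huv).trans h1)]
      have : Real.exp v = Real.exp u * Real.exp (v - u) := by rw [← Real.exp_add]; ring_nf
      rw [this]
      have h3 : 1 - Real.exp (v - u) ≤ -(v - u) := by
        have := Real.add_one_le_exp (v - u); linarith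
      calc Real.exp u - Real.exp u * Real.exp (v - u)
          = Real.exp u * (1 - Real.exp (v - u)) := by ring
        _ ≤ 1 * (u - v) := by
            apply mul_le_mul h1 (by linarith)
              (by nlinarith [Real.exp_le_one_iff.2 (by linarith : v - u ≤ 0)]) zero_le_one
        _ = u - v := one_mul _
    · rw [min_eq_left h1.le]
      rcases le_or_gt 1 (Real.exp v) with h2 | h2
      · rw [min_eq_left h2]; simpa using huv
      · rw [min_eq_right h2.le]
        have hu : 0 < u := by rwa [← Real.exp_lt_exp (x := 0), Real.exp_zero]
        have := Real.add_one_le_exp v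
        linarith
  rw [abs_sub_le_iff]
  constructor
  · rcases le_total b a with h | h
    · exact (key a b h).trans (le_abs_self _)
    · have h1 : min 1 (Real.exp a) - min 1 (Real.exp b) ≤ 0 :=
        sub_nonpos.2 (min_le_min le_rfl (Real.exp_le_exp.2 h))
      exact h1.trans (abs_nonneg _)
  · rcases le_total a b with h | h
    · exact (key b a h).trans (by rw [abs_sub_comm]; exact le_abs_self _)
    · have h1 : min 1 (Real.exp b) - min 1 (Real.exp a) ≤ 0 :=
        sub_nonpos.2 (min_le_min le_rfl (Real.exp_le_exp.2 h))
      exact h1.trans (abs_nonneg _)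

lemma aux_pi_map_eval {d : ℕ} (μ : Fin d → Measure ℝ) [∀ i, IsProbabilityMeasure (μ i)]
    (i : Fin d) : (Measure.pi μ).map (fun y => y i) = μ i := by
  ext s hs
  rw [Measure.map_apply (measurable_pi_apply i) hs]
  have hpre : (fun y : Fin d → ℝ => y i) ⁻¹' s
      = Set.pi Set.univ (Function.update (fun _ => Set.univ) i s) := Set.eval_preimage
  rw [hpre, Measure.pi_pi]
  rw [Finset.prod_eq_single i (fun j _ hj => by rw [Function.update_of_ne hj]; exact measure_univ)
    (fun h => absurd (Finset.mem_univ i) h)]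
  rw [Function.update_self]

/-- the moment constant -/
def Kl (l : ℝ) : ℝ := ∫ z, z ^ 2 * Real.exp (l * |z| / 2) ∂(gaussianReal 0 1)

lemma integrable_Kl (l : ℝ) :
    Integrable (fun z => z ^ 2 * Real.exp (l * |z| / 2)) (gaussianReal 0 1) := by
  rw [gaussianReal_of_var_ne_zero 0 one_ne_zero]
  rw [integrable_withDensity_iff (measurable_gaussianPDF 0 1)
    (ae_of_all _ fun x => ENNReal.ofReal_lt_top)]
  have hC : (0:ℝ) ≤ (Real.sqrt (2 * Real.pi))⁻¹ * (8 * Real.exp (l ^ 2 / 2)) := by positivity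
  apply Integrable.mono' ((integrable_exp_neg_mul_sq (by norm_num : (0:ℝ) < 1/4)).const_mul
    ((Real.sqrt (2 * Real.pi))⁻¹ * (8 * Real.exp (l ^ 2 / 2))))
  · apply AEStronglyMeasurable.mul
    · exact (continuous_pow 2).aestronglyMeasurable.mul
        ((Real.continuous_exp.comp (by continuity)).aestronglyMeasurable)
    · exact (measurable_gaussianPDF 0 1).ennreal_toReal.aestronglyMeasurable
  · refine ae_of_all _ fun z => ?_
    have hpdf : ((gaussianPDF 0 1 z).toReal) = (Real.sqrt (2 * Real.pi))⁻¹ * Real.exp (-z^2/2) := by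
      rw [gaussianPDF, ENNReal.toReal_ofReal (gaussianPDFReal_nonneg 0 1 z), gaussianPDFReal]
      norm_num
    rw [Real.norm_eq_abs, abs_of_nonneg (by positivity), hpdf]
    have h1 : z ^ 2 ≤ 8 * Real.exp (z ^ 2 / 8) := by
      have := Real.add_one_le_exp (z ^ 2 / 8); nlinarith [Real.exp_pos (z ^ 2 / 8)]
    have h2 : Real.exp (z^2/8) * Real.exp (l * |z| / 2) * Real.exp (-z^2/2)
        ≤ Real.exp (l ^ 2 / 2) * Real.exp (-(1/4) * z ^ 2) := by
      rw [← Real.exp_add, ← Real.exp_add, ← Real.exp_add]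
      apply Real.exp_le_exp.2
      nlinarith [sq_nonneg (|z| - 2 * l), sq_abs z]
    have h3 : (0:ℝ) < Real.exp (l * |z| / 2) := Real.exp_pos _
    calc z ^ 2 * Real.exp (l * |z| / 2) * ((Real.sqrt (2 * Real.pi))⁻¹ * Real.exp (-z^2/2))
        ≤ (8 * Real.exp (z^2/8)) * Real.exp (l * |z| / 2) * ((Real.sqrt (2 * Real.pi))⁻¹ * Real.exp (-z^2/2)) := by
          have : (0:ℝ) ≤ (Real.sqrt (2 * Real.pi))⁻¹ * Real.exp (-z^2/2) := by positivity
          exact mul_le_mul_of_nonneg_right (mul_le_mul_of_nonneg_right h1 h3.le) this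
      _ = (Real.sqrt (2 * Real.pi))⁻¹ * 8 * (Real.exp (z^2/8) * Real.exp (l * |z| / 2) * Real.exp (-z^2/2)) := by ring
      _ ≤ (Real.sqrt (2 * Real.pi))⁻¹ * 8 * (Real.exp (l ^ 2 / 2) * Real.exp (-(1/4) * z ^ 2)) := by
          apply mul_le_mul_of_nonneg_left h2 (by positivity)
      _ = (Real.sqrt (2 * Real.pi))⁻¹ * (8 * Real.exp (l ^ 2 / 2)) * Real.exp (-(1/4) * z ^ 2) := by ring

lemma Kl_nonneg (l : ℝ) : 0 ≤ Kl l := integral_nonneg fun z => by positivity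

lemma gauss_scaled (l : ℝ) {c : ℝ} (hc0 : 0 ≤ c) (hcl : c ≤ l) :
    Integrable (fun z => (c * z) ^ 2 * Real.exp (|c * z| / 2)) (gaussianReal 0 1) ∧
    ∫ z, (c * z) ^ 2 * Real.exp (|c * z| / 2) ∂(gaussianReal 0 1) ≤ c ^ 2 * Kl l := by
  have hpt : ∀ z : ℝ, (c * z) ^ 2 * Real.exp (|c * z| / 2)
      ≤ c ^ 2 * (z ^ 2 * Real.exp (l * |z| / 2)) := by
    intro z
    rw [abs_mul, abs_of_nonneg hc0, mul_pow]
    have h1 : Real.exp (c * |z| / 2) ≤ Real.exp (l * |z| / 2) :=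
      Real.exp_le_exp.2 (by nlinarith [abs_nonneg z])
    nlinarith [sq_nonneg (c * z), sq_nonneg z, Real.exp_pos (c * |z| / 2), abs_nonneg z,
      mul_le_mul_of_nonneg_left h1 (mul_nonneg (mul_nonneg (sq_nonneg c) (sq_nonneg z)) (by norm_num : (0:ℝ) ≤ 1))]
  have hint : Integrable (fun z => (c * z) ^ 2 * Real.exp (|c * z| / 2)) (gaussianReal 0 1) := by
    apply Integrable.mono' ((integrable_Kl l).const_mul (c ^ 2))
    · exact ((continuous_pow 2).comp (continuous_const.mul continuous_id)).aestronglyMeasurable.mul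
        ((Real.continuous_exp.comp (by continuity)).aestronglyMeasurable)
    · exact ae_of_all _ fun z => by
        rw [Real.norm_eq_abs, abs_of_nonneg (by positivity)]; exact hpt z
  exact ⟨hint, integral_mono hint ((integrable_Kl l).const_mul (c ^ 2))
    (fun z => by simpa [mul_assoc] using hpt z) |>.trans (le_of_eq (by rw [integral_const_mul]; rfl))⟩

lemma psi_moment (l : ℝ) (hl : 0 < l) (d : ℕ) [NeZero d] (x : Fin d → ℝ) :
    Integrable (fun y : Fin d → ℝ => (y 0 - x 0) ^ 2 * Real.exp (|y 0 - x 0| / 2)) (gaussPi l d x) ∧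
    ∫ y, (y 0 - x 0) ^ 2 * Real.exp (|y 0 - x 0| / 2) ∂(gaussPi l d x) ≤ l ^ 2 / d * Kl l := by
  have hd1 : (1:ℝ) ≤ (d:ℝ) := Nat.one_le_cast.2 (Nat.one_le_iff_ne_zero.2 (NeZero.ne d))
  have hdpos : (0:ℝ) < d := by linarith
  set c : ℝ := Real.sqrt (l ^ 2 / d) with hc
  have hc0 : 0 ≤ c := Real.sqrt_nonneg _
  have hc2 : c ^ 2 = l ^ 2 / d := Real.sq_sqrt (by positivity)
  have hcl : c ≤ l := by
    have h4 : l ^ 2 / (d:ℝ) ≤ l ^ 2 := div_le_self (by positivity) hd1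
    calc c ≤ Real.sqrt (l ^ 2) := Real.sqrt_le_sqrt h4
      _ = l := Real.sqrt_sq hl.le
  set v' : NNReal := (l ^ 2 / (d:ℝ)).toNNReal with hv'
  set ν₀ : Measure ℝ := gaussianReal 0 1 with hν₀
  have hmapeval : (gaussPi l d x).map (fun y => y 0) = gaussianReal (x 0) v' :=
    aux_pi_map_eval (fun i => gaussianReal (x i) v') 0
  have h2 : gaussianReal (x 0) v' = (gaussianReal 0 v').map (· + x 0) := by
    rw [gaussianReal_map_add_const, zero_add]
  have h3 : gaussianReal 0 v' = ν₀.map (fun z => c * z) := by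
    rw [hν₀, gaussianReal_map_const_mul c, mul_zero]
    congr 1
    apply NNReal.coe_injective
    simp [hv', Real.coe_toNNReal _ (show (0:ℝ) ≤ l ^ 2 / (d:ℝ) by positivity), ← hc2]
    exact sq_nonneg c
  have hcomp : (gaussPi l d x).map (fun y => y 0) = ν₀.map (fun z => c * z + x 0) := by
    rw [hmapeval, h2, h3,
      Measure.map_map (measurable_add_const (x 0)) (measurable_const_mul c)]
    rfl
  have hFc : Continuous (fun z : ℝ => (z - x 0) ^ 2 * Real.exp (|z - x 0| / 2)) := by
    have h0 : Continuous (fun z : ℝ => z - x 0) := continuous_id.sub continuous_const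
    exact (h0.pow 2).mul (Real.continuous_exp.comp ((h0.abs).div_const 2))
  have key := gauss_scaled l hc0 hcl
  have hco : ((fun z : ℝ => (z - x 0) ^ 2 * Real.exp (|z - x 0| / 2)) ∘ fun z => c * z + x 0)
      = fun z => (c * z) ^ 2 * Real.exp (|c * z| / 2) := by
    funext z
    simp only [Function.comp_apply, add_sub_cancel_right]
  have hInt1 : Integrable (fun z : ℝ => (z - x 0) ^ 2 * Real.exp (|z - x 0| / 2))
      ((gaussPi l d x).map fun y => y 0) := by
    rw [hcomp, integrable_map_measure hFc.aestronglyMeasurable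
      ((measurable_const_mul c).add_const (x 0)).aemeasurable, hco]
    exact key.1
  have hInt : Integrable (fun y : Fin d → ℝ => (y 0 - x 0) ^ 2 * Real.exp (|y 0 - x 0| / 2))
      (gaussPi l d x) := by
    have := (integrable_map_measure hFc.aestronglyMeasurable
      (measurable_pi_apply 0).aemeasurable).mp hInt1
    exact this
  refine ⟨hInt, ?_⟩
  have heq : ∫ y, (y 0 - x 0) ^ 2 * Real.exp (|y 0 - x 0| / 2) ∂(gaussPi l d x)
      = ∫ z, (c * z) ^ 2 * Real.exp (|c * z| / 2) ∂ν₀ := by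
    have s1 := integral_map (μ := gaussPi l d x) (φ := fun y : Fin d → ℝ => y 0)
      (measurable_pi_apply 0).aemeasurable hFc.aestronglyMeasurable
    have s2 := integral_map (μ := ν₀) (φ := fun z : ℝ => c * z + x 0)
      ((measurable_const_mul c).add_const (x 0)).aemeasurable hFc.aestronglyMeasurable
    rw [← s1, hcomp, s2]
    simp only [add_sub_cancel_right]
  rw [heq, ← hc2]
  exact key.2

lemma reflect_mp (l : ℝ) (d : ℕ) [NeZero d] (x : Fin d → ℝ) :
    MeasurePreserving (fun (y : Fin d → ℝ) i => if i = 0 then 2 * x 0 - y i else y i)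
      (gaussPi l d x) (gaussPi l d x) := by
  have h := measurePreserving_pi (fun i => gaussianReal (x i) ((l ^ 2 / (d:ℝ)).toNNReal))
    (fun i => gaussianReal (x i) ((l ^ 2 / (d:ℝ)).toNNReal))
    (f := fun (i : Fin d) (z : ℝ) => if i = 0 then 2 * x 0 - z else z)
  apply h
  intro i
  by_cases h : i = 0
  · subst h
    simp only [if_pos]
    constructor
    · exact measurable_const.sub measurable_id
    · have hfun : (fun z : ℝ => 2 * x 0 - z) = (fun z => z + 2 * x 0) ∘ (fun z => -1 * z) := by
        funext z; simp [Function.comp]; ring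
      rw [hfun, ← Measure.map_map (measurable_add_const _) (measurable_const_mul _),
        gaussianReal_map_const_mul, gaussianReal_map_add_const]
      congr 1
      · ring
      · apply NNReal.coe_injective; norm_num
  · simp only [if_neg h]
    exact MeasurePreserving.id _


set_option maxHeartbeats 2000000 in
/-- **Lemma.** There is a constant `C` with
`max{|G f(x₁)|, |G_d f(x)|} ≤ C e^{|x₁|} Σ_{i=1}^2 ‖f⁽ⁱ⁾‖_{∞,1/2}` for all `f ∈ S³`,
all `d ∈ ℕ` and all `x ∈ ℝ^d`. -/
theorem stmt13 (ρ : ℝ → ℝ) (hmeas : Measurable ρ) (hpos : ∀ x, 0 < ρ x)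
    (hint : ∫ x, ρ x = 1) (hlog : MemS 4 fun x => Real.log (ρ x))
    (htail : SuperExpTails ρ) (l : ℝ) (hl : 0 < l) :
    ∃ C : ℝ, ∀ f : ℝ → ℝ, MemS 3 f → ∀ (d : ℕ) [NeZero d], ∀ x : Fin d → ℝ,
      max |Gop ρ l f (x 0)| |Gd ρ l d f x| ≤
        C * Real.exp |x 0| * ∑ i ∈ Finset.Icc 1 2, normIS (iteratedDeriv i f) (1/2) := by
  classical
  -- bound on (log ρ)'
  have hB₁bdd := hlog.2 (1/2) (by norm_num) 1 (by norm_num)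
  set B₁ : ℝ := normIS (iteratedDeriv 1 fun x => Real.log (ρ x)) (1/2) with hB₁def
  have hB₁0 : 0 ≤ B₁ := aux_normIS_nonneg hB₁bdd
  have hdleq : dl ρ = iteratedDeriv 1 (fun x => Real.log (ρ x)) := iteratedDeriv_one.symm
  have hdl : ∀ t : ℝ, |dl ρ t| ≤ B₁ * Real.exp (|t| / 2) := by
    intro t
    have h := aux_normIS_le hB₁bdd t
    rw [show (1/2 : ℝ) * |t| = |t| / 2 by ring] at h
    rw [hdleq]
    exact h
  have hlogdiff : Differentiable ℝ (fun t => Real.log (ρ t)) :=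
    hlog.1.differentiable (by norm_num)
  refine ⟨(1 + B₁) * (|hc ρ l| / 2 + l ^ 2 * Kl l), ?_⟩
  intro f hf d _ x
  -- basic facts about f
  have hM₁bdd := hf.2 (1/2) (by norm_num) 1 (by norm_num)
  have hM₂bdd := hf.2 (1/2) (by norm_num) 2 (by norm_num)
  set M₁ : ℝ := normIS (iteratedDeriv 1 f) (1/2) with hM₁def
  set M₂ : ℝ := normIS (iteratedDeriv 2 f) (1/2) with hM₂def
  have hM₁0 : 0 ≤ M₁ := aux_normIS_nonneg hM₁bdd
  have hM₂0 : 0 ≤ M₂ := aux_normIS_nonneg hM₂bdd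
  have hid2 : iteratedDeriv 2 f = deriv (deriv f) := by
    rw [iteratedDeriv_succ, iteratedDeriv_one]
  have hM₁ : ∀ t : ℝ, |deriv f t| ≤ M₁ * Real.exp (|t| / 2) := by
    intro t
    have h := aux_normIS_le hM₁bdd t
    rw [show (1/2 : ℝ) * |t| = |t| / 2 by ring] at h
    calc |deriv f t| = |iteratedDeriv 1 f t| := by rw [iteratedDeriv_one]
      _ ≤ M₁ * Real.exp (|t| / 2) := h
  have hM₂ : ∀ t : ℝ, |deriv (deriv f) t| ≤ M₂ * Real.exp (|t| / 2) := by
    intro t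
    have h := aux_normIS_le hM₂bdd t
    rw [show (1/2 : ℝ) * |t| = |t| / 2 by ring] at h
    calc |deriv (deriv f) t| = |iteratedDeriv 2 f t| := by rw [hid2]
      _ ≤ M₂ * Real.exp (|t| / 2) := h
  have hfdiff : Differentiable ℝ f := hf.1.differentiable (by norm_num)
  have hf'diff : Differentiable ℝ (deriv f) :=
    ((contDiff_succ_iff_deriv (n := 2)).mp (by exact_mod_cast hf.1)).2.2.differentiable
      (by norm_num)
  have hsum : ∑ i ∈ Finset.Icc 1 2, normIS (iteratedDeriv i f) (1/2) = M₁ + M₂ := by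
    rw [show Finset.Icc 1 2 = {1, 2} from rfl]
    rw [Finset.sum_insert (by decide), Finset.sum_singleton]
  rw [hsum]
  set E : ℝ := Real.exp |x 0| with hEdef
  set e₂ : ℝ := Real.exp (|x 0| / 2) with he₂def
  have he₂E : e₂ * e₂ = E := by rw [he₂def, ← Real.exp_add, add_halves]
  have he₂0 : 0 < e₂ := Real.exp_pos _
  have hE0 : 0 < E := Real.exp_pos _
  have he₂leE : e₂ ≤ E := by
    rw [he₂def, hEdef]
    exact Real.exp_le_exp.2 (by linarith [abs_nonneg (x 0)])
  apply max_le
  · -- the limiting generator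
    have key : |deriv (deriv f) (x 0) + dl ρ (x 0) * deriv f (x 0)|
        ≤ M₂ * e₂ + B₁ * M₁ * E := by
      calc |deriv (deriv f) (x 0) + dl ρ (x 0) * deriv f (x 0)|
          ≤ |deriv (deriv f) (x 0)| + |dl ρ (x 0)| * |deriv f (x 0)| := by
            rw [← abs_mul]; exact abs_add_le _ _
        _ ≤ M₂ * e₂ + (B₁ * e₂) * (M₁ * e₂) := by
            refine add_le_add (hM₂ (x 0)) ?_
            exact mul_le_mul (hdl (x 0)) (hM₁ (x 0)) (abs_nonneg _)
              (by positivity)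
        _ = M₂ * e₂ + B₁ * M₁ * E := by rw [← he₂E]; ring
    have h1 : |Gop ρ l f (x 0)| ≤ |hc ρ l| / 2 * (M₂ * e₂ + B₁ * M₁ * E) := by
      simp only [Gop]
      rw [abs_mul, abs_div, abs_two]
      exact mul_le_mul_of_nonneg_left key (by positivity)
    refine h1.trans ?_
    have s2 : M₂ * e₂ + B₁ * M₁ * E ≤ (1 + B₁) * (M₁ + M₂) * E := by
      have h2 : M₂ * e₂ ≤ M₂ * E := mul_le_mul_of_nonneg_left he₂leE hM₂0
      nlinarith [mul_nonneg hM₁0 hE0.le, mul_nonneg hM₂0 hE0.le,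
        mul_nonneg hB₁0 (mul_nonneg hM₂0 hE0.le)]
    have hKl : 0 ≤ l ^ 2 * Kl l := mul_nonneg (sq_nonneg l) (Kl_nonneg l)
    have hprod : 0 ≤ (1 + B₁) * (M₁ + M₂) * E * (l ^ 2 * Kl l) := by
      apply mul_nonneg (mul_nonneg (mul_nonneg (by linarith) (by linarith)) hE0.le) hKl
    calc |hc ρ l| / 2 * (M₂ * e₂ + B₁ * M₁ * E)
        ≤ |hc ρ l| / 2 * ((1 + B₁) * (M₁ + M₂) * E) :=
          mul_le_mul_of_nonneg_left s2 (by positivity)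
      _ ≤ (1 + B₁) * (|hc ρ l| / 2 + l ^ 2 * Kl l) * E * (M₁ + M₂) := by nlinarith [hprod]
  · -- the RWM generator
    have hd1 : (1:ℝ) ≤ (d:ℝ) := Nat.one_le_cast.2 (Nat.one_le_iff_ne_zero.2 (NeZero.ne d))
    have hdpos : (0:ℝ) < (d:ℝ) := by linarith
    obtain ⟨hψint, hψbound⟩ := psi_moment l hl d x
    set μ : Measure (Fin d → ℝ) := gaussPi l d x with hμdef
    haveI : IsProbabilityMeasure μ := by
      rw [hμdef, gaussPi]; infer_instance
    set c₁ : ℝ := deriv f (x 0) with hc₁def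
    set m : (Fin d → ℝ) → ℝ := fun y => min 1 ((∏ i, ρ (y i)) / ∏ i, ρ (x i)) with hmdef
    set A : (Fin d → ℝ) → ℝ := fun y => c₁ * (y 0 - x 0) * m y with hAdef
    set B : (Fin d → ℝ) → ℝ := fun y => (f (y 0) - f (x 0) - c₁ * (y 0 - x 0)) * m y with hBdef
    set T : (Fin d → ℝ) → (Fin d → ℝ) := fun y i => if i = 0 then 2 * x 0 - y i else y i
      with hTdef
    set ψd : (Fin d → ℝ) → ℝ := fun y => (y 0 - x 0) ^ 2 * Real.exp (|y 0 - x 0| / 2)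
      with hψddef
    have hψd_nonneg : ∀ y, 0 ≤ ψd y := fun y => by simp only [hψddef]; positivity
    have hψnn : 0 ≤ ∫ y, ψd y ∂μ := integral_nonneg fun y => hψd_nonneg y
    -- basic facts about m
    have hm_meas : Measurable m := by
      rw [hmdef]
      exact measurable_const.min ((Finset.measurable_prod Finset.univ
        fun i _ => hmeas.comp (measurable_pi_apply i)).div_const _)
    have hm_nonneg : ∀ y, 0 ≤ m y := fun y => le_min zero_le_one
      (div_nonneg (Finset.prod_nonneg fun i _ => (hpos _).le)
        (Finset.prod_nonneg fun i _ => (hpos _).le))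
    have hm_le_one : ∀ y, m y ≤ 1 := fun y => min_le_left _ _
    have hm_abs : ∀ y, |m y| ≤ 1 := fun y => abs_le.2 ⟨by linarith [hm_nonneg y], hm_le_one y⟩
    -- Taylor-type bound for f
    have htaylor : ∀ z : ℝ, |f z - f (x 0) - c₁ * (z - x 0)|
        ≤ M₂ * e₂ * ((z - x 0) ^ 2 * Real.exp (|z - x 0| / 2)) := by
      intro z
      set δ : ℝ := |z - x 0| with hδ
      have hδ0 : 0 ≤ δ := abs_nonneg _
      set S : Set ℝ := Metric.closedBall (x 0) δ with hS
      have hzS : z ∈ S := by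
        rw [hS]; simp only [Metric.mem_closedBall, Real.dist_eq]; rw [hδ]
      have hx0S : x 0 ∈ S := Metric.mem_closedBall_self hδ0
      have habs : ∀ t ∈ S, |t| ≤ |x 0| + δ := by
        intro t ht
        rw [hS] at ht
        have h1 : |t - x 0| ≤ δ := by
          simpa only [Metric.mem_closedBall, Real.dist_eq] using ht
        calc |t| = |x 0 + (t - x 0)| := by ring_nf
          _ ≤ |x 0| + |t - x 0| := abs_add_le _ _
          _ ≤ |x 0| + δ := by linarith
      have hC2 : ∀ t ∈ S, ‖deriv (deriv f) t‖ ≤ M₂ * Real.exp ((|x 0| + δ) / 2) := by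
        intro t ht
        rw [Real.norm_eq_abs]
        exact (hM₂ t).trans (mul_le_mul_of_nonneg_left
          (Real.exp_le_exp.2 (by linarith [habs t ht])) hM₂0)
      have step1 : ∀ t ∈ S, ‖deriv f t - deriv f (x 0)‖
          ≤ M₂ * Real.exp ((|x 0| + δ) / 2) * ‖t - x 0‖ := fun t ht =>
        Convex.norm_image_sub_le_of_norm_hasDerivWithin_le
          (fun u _ => (hf'diff u).hasDerivAt.hasDerivWithinAt) hC2
          (convex_closedBall _ _) hx0S ht
      have hg' : ∀ t ∈ S, HasDerivWithinAt (fun u => f u - f (x 0) - c₁ * (u - x 0))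
          (deriv f t - c₁) S t := by
        intro t _
        have h2 : HasDerivAt (fun u : ℝ => c₁ * (u - x 0)) c₁ t := by
          simpa using ((hasDerivAt_id t).sub_const (x 0)).const_mul c₁
        exact (((hfdiff t).hasDerivAt.sub_const (f (x 0))).sub h2).hasDerivWithinAt
      have hbound : ∀ t ∈ S, ‖deriv f t - c₁‖ ≤ M₂ * Real.exp ((|x 0| + δ) / 2) * δ := by
        intro t ht
        refine (step1 t ht).trans (mul_le_mul_of_nonneg_left ?_ (by positivity))
        rw [Real.norm_eq_abs]
        rw [hS] at ht
        simpa only [Metric.mem_closedBall, Real.dist_eq] using ht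
      have step2 := Convex.norm_image_sub_le_of_norm_hasDerivWithin_le hg' hbound
        (convex_closedBall _ _) hx0S hzS
      simp only [sub_self, mul_zero, sub_zero, Real.norm_eq_abs] at step2
      have hfin : M₂ * Real.exp ((|x 0| + δ) / 2) * δ * |z - x 0|
          = M₂ * e₂ * ((z - x 0) ^ 2 * Real.exp (δ / 2)) := by
        rw [add_div, Real.exp_add, ← he₂def, hδ, ← sq_abs]
        ring
      calc |f z - f (x 0) - c₁ * (z - x 0)| ≤ M₂ * Real.exp ((|x 0| + δ) / 2) * δ * |z - x 0| :=
            step2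
        _ = M₂ * e₂ * ((z - x 0) ^ 2 * Real.exp (δ / 2)) := hfin
    -- Lipschitz-type bound for log ρ between reflected points
    have hliplog : ∀ z : ℝ, |Real.log (ρ z) - Real.log (ρ (2 * x 0 - z))|
        ≤ B₁ * e₂ * (2 * |z - x 0| * Real.exp (|z - x 0| / 2)) := by
      intro z
      set δ : ℝ := |z - x 0| with hδ
      have hδ0 : 0 ≤ δ := abs_nonneg _
      set S : Set ℝ := Metric.closedBall (x 0) δ with hS
      have hzS : z ∈ S := by
        rw [hS]; simp only [Metric.mem_closedBall, Real.dist_eq]; rw [hδ]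
      have hz2S : 2 * x 0 - z ∈ S := by
        rw [hS]; simp only [Metric.mem_closedBall, Real.dist_eq]
        rw [hδ, show 2 * x 0 - z - x 0 = -(z - x 0) by ring, abs_neg]
      have habs : ∀ t ∈ S, |t| ≤ |x 0| + δ := by
        intro t ht
        rw [hS] at ht
        have h1 : |t - x 0| ≤ δ := by
          simpa only [Metric.mem_closedBall, Real.dist_eq] using ht
        calc |t| = |x 0 + (t - x 0)| := by ring_nf
          _ ≤ |x 0| + |t - x 0| := abs_add_le _ _
          _ ≤ |x 0| + δ := by linarith
      have hC : ∀ t ∈ S, ‖dl ρ t‖ ≤ B₁ * Real.exp ((|x 0| + δ) / 2) := by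
        intro t ht
        rw [Real.norm_eq_abs]
        exact (hdl t).trans (mul_le_mul_of_nonneg_left
          (Real.exp_le_exp.2 (by linarith [habs t ht])) hB₁0)
      have step := Convex.norm_image_sub_le_of_norm_hasDerivWithin_le
        (f := fun t => Real.log (ρ t)) (f' := dl ρ)
        (fun u _ => (hlogdiff u).hasDerivAt.hasDerivWithinAt) hC
        (convex_closedBall _ _) hz2S hzS
      rw [Real.norm_eq_abs, Real.norm_eq_abs] at step
      have h2 : |z - (2 * x 0 - z)| = 2 * δ := by
        rw [hδ, show z - (2 * x 0 - z) = 2 * (z - x 0) by ring, abs_mul, abs_two]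
      rw [h2] at step
      refine step.trans (le_of_eq ?_)
      rw [add_div, Real.exp_add, ← he₂def]
      ring
    -- the key difference bound on m
    have hmdiff : ∀ y : Fin d → ℝ, |m y - m (T y)|
        ≤ |Real.log (ρ (y 0)) - Real.log (ρ (2 * x 0 - y 0))| := by
      intro y
      have hprodexp : ∀ w : Fin d → ℝ, (∏ i, ρ (w i)) / (∏ i, ρ (x i))
          = Real.exp ((∑ i, Real.log (ρ (w i))) - ∑ i, Real.log (ρ (x i))) := by
        intro w
        rw [Real.exp_sub, Real.exp_sum, Real.exp_sum]
        congr 1 <;> exact Finset.prod_congr rfl fun i _ => (Real.exp_log (hpos _)).symm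
      have h1 : m y = min 1 (Real.exp ((∑ i, Real.log (ρ (y i))) - ∑ i, Real.log (ρ (x i)))) := by
        rw [hmdef]; dsimp only; rw [hprodexp]
      have h2 : m (T y) = min 1 (Real.exp ((∑ i, Real.log (ρ (T y i)))
          - ∑ i, Real.log (ρ (x i)))) := by
        rw [hmdef]; dsimp only; rw [hprodexp]
      rw [h1, h2]
      refine (aux_min_exp_lip _ _).trans (le_of_eq ?_)
      have hT0 : T y 0 = 2 * x 0 - y 0 := by rw [hTdef]; simp
      have hsum2 : (∑ i, Real.log (ρ (y i))) - (∑ i, Real.log (ρ (T y i)))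
          = Real.log (ρ (y 0)) - Real.log (ρ (2 * x 0 - y 0)) := by
        rw [← Finset.sum_sub_distrib, Finset.sum_eq_single 0]
        · rw [hT0]
        · intro i _ hi
          have : T y i = y i := by rw [hTdef]; dsimp only; rw [if_neg hi]
          rw [this, sub_self]
        · intro h; exact absurd (Finset.mem_univ 0) h
      rw [show (∑ i, Real.log (ρ (y i))) - (∑ i, Real.log (ρ (x i)))
          - ((∑ i, Real.log (ρ (T y i))) - ∑ i, Real.log (ρ (x i)))
          = (∑ i, Real.log (ρ (y i))) - (∑ i, Real.log (ρ (T y i))) by ring, hsum2]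
    -- measurability and integrability
    have hT : MeasurePreserving T μ μ := reflect_mp l d x
    have hA_meas : Measurable A := by
      rw [hAdef]
      exact (((measurable_pi_apply 0).sub_const (x 0)).const_mul c₁).mul hm_meas
    have hB_meas : Measurable B := by
      rw [hBdef]
      exact (((hf.1.continuous.measurable.comp (measurable_pi_apply (0 : Fin d))).sub_const
        (f (x 0))).sub (show Measurable fun y : Fin d → ℝ => c₁ * (y 0 - x 0) by fun_prop)).mul hm_meas
    have habs_z : ∀ z : ℝ, |z| ≤ 1 + z ^ 2 * Real.exp (|z| / 2) := by
      intro z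
      have h1 : |z| ≤ 1 + z ^ 2 := by nlinarith [sq_nonneg (|z| - 1), sq_abs z]
      have h2 : z ^ 2 ≤ z ^ 2 * Real.exp (|z| / 2) :=
        le_mul_of_one_le_right (sq_nonneg z) (Real.one_le_exp (by positivity))
      linarith
    have hA_dom : ∀ y, ‖A y‖ ≤ |c₁| + |c₁| * ψd y := by
      intro y
      rw [Real.norm_eq_abs, hAdef]
      dsimp only
      calc |c₁ * (y 0 - x 0) * m y| = |c₁| * |y 0 - x 0| * |m y| := by
            rw [abs_mul, abs_mul]
        _ ≤ |c₁| * (1 + ψd y) * 1 := by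
            refine mul_le_mul (mul_le_mul_of_nonneg_left ?_ (abs_nonneg c₁)) (hm_abs y)
              (abs_nonneg _) (mul_nonneg (abs_nonneg c₁) (by linarith [hψd_nonneg y]))
            · simp only [hψddef]; exact habs_z (y 0 - x 0)
        _ = |c₁| + |c₁| * ψd y := by ring
    have hA_int : Integrable A μ := by
      refine Integrable.mono' ((integrable_const |c₁|).add (hψint.const_mul |c₁|))
        hA_meas.aestronglyMeasurable (ae_of_all _ fun y => ?_)
      exact (hA_dom y).trans (le_of_eq rfl)
    have hB_dom : ∀ y, ‖B y‖ ≤ M₂ * e₂ * ψd y := by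
      intro y
      rw [Real.norm_eq_abs, hBdef]
      dsimp only
      rw [abs_mul]
      calc |f (y 0) - f (x 0) - c₁ * (y 0 - x 0)| * |m y|
          ≤ (M₂ * e₂ * ψd y) * 1 := by
            refine mul_le_mul ?_ (hm_abs y) (abs_nonneg _)
              (mul_nonneg (mul_nonneg hM₂0 he₂0.le) (hψd_nonneg y))
            · simpa only [hψddef] using htaylor (y 0)
        _ = M₂ * e₂ * ψd y := mul_one _
    have hB_int : Integrable B μ :=
      Integrable.mono' (hψint.const_mul (M₂ * e₂)) hB_meas.aestronglyMeasurable
        (ae_of_all _ fun y => hB_dom y)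
    have hAT_int : Integrable (fun y => A (T y)) μ := by
      have h1 : Integrable A (Measure.map T μ) := by rw [hT.map_eq]; exact hA_int
      exact (integrable_map_measure hA_meas.aestronglyMeasurable
        hT.measurable.aemeasurable).mp h1
    -- splitting the generator
    have hGdeq : Gd ρ l d f x = (d:ℝ) * ((∫ y, A y ∂μ) + ∫ y, B y ∂μ) := by
      have h1 : (fun y : Fin d → ℝ =>
          (f (y 0) - f (x 0)) * min 1 ((∏ i, ρ (y i)) / ∏ i, ρ (x i)))
          = fun y => A y + B y := by
        funext y
        simp only [hAdef, hBdef, hmdef]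
        ring
      calc Gd ρ l d f x = (d:ℝ) * ∫ y, (A y + B y) ∂μ := by
            rw [Gd, ← hμdef, h1]
        _ = (d:ℝ) * ((∫ y, A y ∂μ) + ∫ y, B y ∂μ) := by
            rw [integral_add hA_int hB_int]
    -- symmetry bound on the first-order term
    have hAT_eq : ∫ y, A y ∂μ = ∫ y, A (T y) ∂μ := by
      conv_lhs => rw [← hT.map_eq]
      exact integral_map hT.measurable.aemeasurable hA_meas.aestronglyMeasurable
    have hApt : ∀ y, ‖A y + A (T y)‖ ≤ 2 * (|c₁| * B₁ * e₂) * ψd y := by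
      intro y
      have hT0 : T y 0 = 2 * x 0 - y 0 := by rw [hTdef]; simp
      have h1 : A y + A (T y) = c₁ * (y 0 - x 0) * (m y - m (T y)) := by
        simp only [hAdef]
        rw [hT0]
        ring
      rw [Real.norm_eq_abs, h1, abs_mul, abs_mul]
      calc |c₁| * |y 0 - x 0| * |m y - m (T y)|
          ≤ |c₁| * |y 0 - x 0| *
            (B₁ * e₂ * (2 * |y 0 - x 0| * Real.exp (|y 0 - x 0| / 2))) :=
            mul_le_mul_of_nonneg_left ((hmdiff y).trans (hliplog (y 0)))
              (mul_nonneg (abs_nonneg _) (abs_nonneg _))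
        _ = 2 * (|c₁| * B₁ * e₂) * ψd y := by
            simp only [hψddef]
            rw [← sq_abs]
            ring
    have hIA : |∫ y, A y ∂μ| ≤ |c₁| * B₁ * e₂ * ∫ y, ψd y ∂μ := by
      have h2 : (2:ℝ) * ∫ y, A y ∂μ = ∫ y, (A y + A (T y)) ∂μ := by
        rw [integral_add hA_int hAT_int, ← hAT_eq]
        ring
      have h3 : |∫ y, (A y + A (T y)) ∂μ| ≤ ∫ y, 2 * (|c₁| * B₁ * e₂) * ψd y ∂μ := by
        rw [← Real.norm_eq_abs]
        refine (norm_integral_le_integral_norm _).trans ?_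
        exact integral_mono (hA_int.add hAT_int).norm
          ((hψint.const_mul _)) (fun y => hApt y)
      rw [integral_const_mul] at h3
      rw [← h2, abs_mul, abs_two] at h3
      linarith [abs_nonneg (∫ y, A y ∂μ)]
    have hIB : |∫ y, B y ∂μ| ≤ M₂ * e₂ * ∫ y, ψd y ∂μ := by
      rw [← Real.norm_eq_abs]
      refine (norm_integral_le_integral_norm _).trans ?_
      have := integral_mono hB_int.norm (hψint.const_mul (M₂ * e₂)) (fun y => hB_dom y)
      rwa [integral_const_mul] at this
    -- putting things together
    have hcb : |c₁| ≤ M₁ * e₂ := hM₁ (x 0)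
    have hKl0 : 0 ≤ Kl l := Kl_nonneg l
    have hsum_nn : 0 ≤ |c₁| * B₁ * e₂ + M₂ * e₂ := by
      have := abs_nonneg c₁
      positivity
    rw [hGdeq, abs_mul, Nat.abs_cast]
    calc (d:ℝ) * |(∫ y, A y ∂μ) + ∫ y, B y ∂μ|
        ≤ (d:ℝ) * ((|∫ y, A y ∂μ|) + |∫ y, B y ∂μ|) :=
          mul_le_mul_of_nonneg_left (abs_add_le _ _) hdpos.le
      _ ≤ (d:ℝ) * ((|c₁| * B₁ * e₂ + M₂ * e₂) * ∫ y, ψd y ∂μ) := by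
          refine mul_le_mul_of_nonneg_left ?_ hdpos.le
          rw [add_mul]
          exact add_le_add hIA hIB
      _ ≤ (d:ℝ) * ((|c₁| * B₁ * e₂ + M₂ * e₂) * (l ^ 2 / d * Kl l)) := by
          refine mul_le_mul_of_nonneg_left (mul_le_mul_of_nonneg_left ?_ hsum_nn) hdpos.le
          exact hψbound
      _ = (|c₁| * B₁ * e₂ + M₂ * e₂) * (l ^ 2 * Kl l) := by
          field_simp
      _ ≤ (M₁ * e₂ * B₁ * e₂ + M₂ * e₂) * (l ^ 2 * Kl l) := by
          refine mul_le_mul_of_nonneg_right ?_ (by positivity)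
          have h5 := mul_le_mul_of_nonneg_right
            (mul_le_mul_of_nonneg_right hcb hB₁0) he₂0.le
          linarith
      _ ≤ (1 + B₁) * (M₁ + M₂) * E * (l ^ 2 * Kl l) := by
          refine mul_le_mul_of_nonneg_right ?_ (by positivity)
          have h6 : M₁ * e₂ * B₁ * e₂ = B₁ * M₁ * E := by rw [← he₂E]; ring
          have h7 : M₂ * e₂ ≤ M₂ * E := mul_le_mul_of_nonneg_left he₂leE hM₂0
          rw [h6]
          nlinarith [mul_nonneg hM₁0 hE0.le, mul_nonneg hM₂0 hE0.le,
            mul_nonneg hB₁0 (mul_nonneg hM₂0 hE0.le)]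
      _ ≤ (1 + B₁) * (|hc ρ l| / 2 + l ^ 2 * Kl l) * E * (M₁ + M₂) := by
          have hprod2 : 0 ≤ (1 + B₁) * (M₁ + M₂) * E * (|hc ρ l| / 2) := by
            have := abs_nonneg (hc ρ l)
            have h8 : (0:ℝ) ≤ 1 + B₁ := by linarith
            have h9 : (0:ℝ) ≤ M₁ + M₂ := by linarith
            positivity
          nlinarith [hprod2]
end
end

section
/- Let X be a real random variable with finite mean μ, variance σ² > 0, and finite absolute third central moment κ := E[|X−μ|³]. Then for all t with |t| ≤ 1/σ, the characteristic function φ_X of X satisfies |Log(e^{−iμt}·φ_X(t)) + (σ²/2)t²| ≤ κ|t|³/6 + σ⁴t⁴/4, where Log denotes the principal branch of the complex logarithm (equivalently, |log φ_X(t) − (iμt − σ²t²/2)| ≤ κ|t|³/6 + σ⁴t⁴/4 with log φ_X(t) := iμt + Log(e^{−iμt}φ_X(t))). -/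
open MeasureTheory Filter Set

noncomputable section

/-- the characteristic function of a law `μ` on `ℝ` -/
def charF (μ : Measure ℝ) (t : ℝ) : ℂ := ∫ x, Complex.exp (t * x * Complex.I) ∂μ

section AuxTaylor
open Complex Finset

lemma expDeriv (n : ℕ) (s : ℝ) :
    HasDerivAt (fun θ : ℝ => Complex.exp (θ * I) - ∑ k ∈ Finset.range (n+1), (θ * I)^k / k.factorial)
      (I * (Complex.exp (s * I) - ∑ k ∈ Finset.range n, (s * I)^k / k.factorial)) s := by
  have h1 : HasDerivAt (fun θ : ℝ => ((θ : ℂ) * I)) I s := by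
    simpa using (Complex.ofRealCLM.hasDerivAt (x := s)).mul_const I
  have he : HasDerivAt (fun θ : ℝ => Complex.exp (θ * I)) (Complex.exp (s*I) * I) s := h1.cexp
  have hs : ∀ k : ℕ, HasDerivAt (fun θ : ℝ => ((θ:ℂ))^k * (I^k / k.factorial))
      ((k * (s:ℂ)^(k-1)) * (I^k / k.factorial)) s := by
    intro k
    exact (hasDerivAt_pow k ((s:ℂ))).comp_ofReal.mul_const _
  have hsum : HasDerivAt (fun θ : ℝ => ∑ k ∈ Finset.range (n+1), ((θ:ℂ))^k * (I^k / k.factorial))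
      (∑ k ∈ Finset.range (n+1), ((k * (s:ℂ)^(k-1)) * (I^k / k.factorial))) s :=
    HasDerivAt.fun_sum (fun k _ => hs k)
  have key := he.fun_sub hsum
  have hfun : (fun θ : ℝ => Complex.exp (θ * I) - ∑ k ∈ Finset.range (n+1), (θ * I)^k / k.factorial)
      = (fun θ : ℝ => Complex.exp (θ * I) - ∑ k ∈ Finset.range (n+1), ((θ:ℂ))^k * (I^k / k.factorial)) := by
    funext θ
    simp [mul_pow, mul_div_assoc]
  rw [hfun]
  refine key.congr_deriv (Eq.symm ?_)
  rw [Finset.sum_range_succ']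
  have h0 : (((0:ℕ):ℂ) * (s:ℂ)^(0-1)) * (I^0 / ((Nat.factorial 0 : ℕ):ℂ)) = 0 := by simp
  rw [h0, add_zero, mul_sub, Finset.mul_sum]
  congr 1
  · ring
  · refine Finset.sum_congr rfl fun k _ => ?_
    have hf : (((k+1).factorial : ℕ) : ℂ) = (k+1) * k.factorial := by
      push_cast [Nat.factorial_succ]; ring
    have hf0 : (k.factorial : ℂ) ≠ 0 := by exact_mod_cast k.factorial_ne_zero
    have hk : ((k:ℂ) + 1) ≠ 0 := Nat.cast_add_one_ne_zero k
    rw [mul_pow, pow_succ, hf, Nat.add_sub_cancel]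
    field_simp
    push_cast
    ring

lemma expTaylor_nonneg (n : ℕ) : ∀ θ : ℝ, 0 ≤ θ →
    ‖Complex.exp (θ * I) - ∑ k ∈ Finset.range n, (θ * I)^k / k.factorial‖
      ≤ θ^n / n.factorial := by
  induction n with
  | zero =>
    intro θ hθ
    simpa using le_of_eq (Complex.abs_exp_ofReal_mul_I θ)
  | succ n ih =>
    intro θ hθ
    set F : ℝ → ℂ := fun s => Complex.exp (s * I) - ∑ k ∈ Finset.range n, (s * I)^k / k.factorial
      with hF
    have hFcont : Continuous F := by
      apply Continuous.sub
      · exact Complex.continuous_exp.comp (by continuity)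
      · continuity
    have hFTC : Complex.exp (θ * I) - ∑ k ∈ Finset.range (n+1), (θ * I)^k / k.factorial
        = ∫ s in (0:ℝ)..θ, I * F s := by
      have := intervalIntegral.integral_eq_sub_of_hasDerivAt
        (f := fun s : ℝ => Complex.exp (s * I) - ∑ k ∈ Finset.range (n+1), (s * I)^k / k.factorial)
        (fun s _ => expDeriv n s)
        (((continuous_const.mul hFcont).intervalIntegrable 0 θ))
      rw [this]
      simp
      rw [show (∑ x ∈ Finset.range (n + 1), (0:ℂ) ^ x / (x.factorial:ℂ)) = 1 from by
        rw [Finset.sum_range_succ']; simp]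
      ring
    rw [hFTC]
    calc ‖∫ s in (0:ℝ)..θ, I * F s‖ ≤ ∫ s in (0:ℝ)..θ, ‖I * F s‖ :=
          intervalIntegral.norm_integral_le_integral_norm hθ
      _ ≤ ∫ s in (0:ℝ)..θ, s^n / n.factorial := by
          apply intervalIntegral.integral_mono_on hθ
          · exact ((continuous_const.mul hFcont).norm.intervalIntegrable 0 θ)
          · exact ((continuous_pow n).div_const _).intervalIntegrable 0 θ
          · intro s hs
            rw [norm_mul, Complex.norm_I, one_mul]
            exact ih s hs.1
      _ = θ^(n+1) / (n+1).factorial := by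
          rw [intervalIntegral.integral_div, integral_pow]
          rw [Nat.factorial_succ]
          push_cast
          field_simp
          simp

lemma expTaylor (n : ℕ) (θ : ℝ) :
    ‖Complex.exp (θ * I) - ∑ k ∈ Finset.range n, (θ * I)^k / k.factorial‖
      ≤ |θ|^n / n.factorial := by
  rcases le_total 0 θ with h | h
  · rw [_root_.abs_of_nonneg h]; exact expTaylor_nonneg n θ h
  · have h' := expTaylor_nonneg n (-θ) (by linarith)
    rw [_root_.abs_of_nonpos h]
    have key : Complex.exp (θ * I) - ∑ k ∈ Finset.range n, (θ * I)^k / k.factorial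
        = starRingEnd ℂ (Complex.exp ((-θ:ℝ) * I)
            - ∑ k ∈ Finset.range n, (((-θ:ℝ):ℂ) * I)^k / k.factorial) := by
      rw [map_sub, map_sum, ← Complex.exp_conj]
      congr 1
      · congr 1
        simp [Complex.conj_I]
      · refine Finset.sum_congr rfl fun k _ => ?_
        rw [map_div₀, map_pow, map_mul, Complex.conj_ofReal, Complex.conj_I]
        push_cast
        ring_nf
        simp [Complex.conj_natCast]
    rw [key, RCLike.norm_conj]
    simpa using h'

lemma exp2 (θ : ℝ) : ‖Complex.exp (θ * I) - (1 + θ * I)‖ ≤ θ^2 / 2 := by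
  have := expTaylor 2 θ
  rw [Finset.sum_range_succ, Finset.sum_range_succ, Finset.sum_range_zero] at this
  simp only [pow_zero, pow_one, Nat.factorial_zero, Nat.factorial_one] at this
  norm_num [Nat.factorial] at this
  convert this using 2

lemma exp3 (θ : ℝ) :
    ‖Complex.exp (θ * I) - (1 + θ * I - (θ:ℂ)^2 / 2)‖ ≤ |θ|^3 / 6 := by
  have := expTaylor 3 θ
  rw [Finset.sum_range_succ, Finset.sum_range_succ, Finset.sum_range_succ,
    Finset.sum_range_zero] at this
  simp only [pow_zero, pow_one, Nat.factorial_zero, Nat.factorial_one] at this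
  have h2 : ((θ:ℂ) * I)^2 = -(θ:ℂ)^2 := by
    rw [mul_pow, Complex.I_sq]; ring
  rw [h2] at this
  have h6 : ((Nat.factorial 3 : ℕ) : ℝ) = 6 := by norm_num [Nat.factorial]
  rw [show (Nat.factorial 3 : ℕ) = 6 from by norm_num [Nat.factorial]] at this
  norm_num [Nat.factorial] at this ⊢
  convert this using 2
  push_cast
  ring

end AuxTaylor

open Complex in
/-- **Lemma.** If `X` has mean `μ`, variance `σ² > 0` and absolute third central moment `κ`,
then `|Log(e^{−iμt} φ_X(t)) + σ²t²/2| ≤ κ|t|³/6 + σ⁴t⁴/4` for `|t| ≤ 1/σ`, where `Log` is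
the principal branch of the complex logarithm. -/
theorem stmt19 (μX : Measure ℝ) [IsProbabilityMeasure μX] (m σ κ : ℝ) (hσ : 0 < σ)
    (hint1 : Integrable (fun x : ℝ => x) μX) (hm : ∫ x, x ∂μX = m)
    (hint2 : Integrable (fun x : ℝ => (x - m) ^ 2) μX) (hv : ∫ x, (x - m) ^ 2 ∂μX = σ ^ 2)
    (hint3 : Integrable (fun x : ℝ => |x - m| ^ 3) μX) (hκ : ∫ x, |x - m| ^ 3 ∂μX = κ) :
    ∀ t : ℝ, |t| ≤ 1 / σ →
      ‖Complex.log (Complex.exp (-(m * t) * Complex.I) * charF μX t) +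
            ((σ ^ 2 * t ^ 2 / 2 : ℝ) : ℂ)‖ ≤
        κ * |t| ^ 3 / 6 + σ ^ 4 * t ^ 4 / 4 := by
  intro t ht
  set g : ℝ → ℂ := fun x => Complex.exp (((t * (x - m) : ℝ) : ℂ) * I) with hg
  -- step 1 : the centered charF
  have hψ : Complex.exp (-(m * t) * Complex.I) * charF μX t = ∫ x, g x ∂μX := by
    rw [charF, ← integral_const_mul]
    congr 1
    funext x
    rw [← Complex.exp_add]
    congr 1
    push_cast
    ring
  -- integrability
  have hgc : Continuous g := by
    apply Complex.continuous_exp.comp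
    continuity
  have hg_int : Integrable g μX := by
    refine (integrable_const (1:ℝ)).mono' hgc.aestronglyMeasurable ?_
    filter_upwards with x
    simp only [hg]
    rw [Complex.norm_exp_ofReal_mul_I]
  have hu_int : Integrable (fun x : ℝ => t * (x - m)) μX :=
    ((hint1.sub (integrable_const m)).const_mul t)
  have h1 : Integrable (fun x : ℝ => ((t * (x - m) : ℝ) : ℂ) * I) μX :=
    (hu_int.ofReal).mul_const I
  have hu2_int : Integrable (fun x : ℝ => (t * (x - m))^2) μX := by
    have := hint2.const_mul (t^2)
    convert this using 1
    funext x; ring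
  have h2 : Integrable (fun x : ℝ => (((t * (x - m))^2 : ℝ) : ℂ) / 2) μX :=
    (hu2_int.ofReal).div_const 2
  have hu3_int : Integrable (fun x : ℝ => |t * (x - m)|^3 / 6) μX := by
    have := (hint3.const_mul (|t|^3)).div_const 6
    convert this using 1
    funext x
    rw [abs_mul, mul_pow]
  -- integral values
  have hr1 : ∫ x, t * (x - m) ∂μX = 0 := by
    rw [integral_const_mul, integral_sub hint1 (integrable_const m), hm, integral_const]
    simp
  have hr2 : ∫ x, (t * (x - m))^2 ∂μX = σ^2 * t^2 := by
    have he : (fun x : ℝ => (t * (x - m))^2) = fun x => t^2 * (x - m)^2 := by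
      funext x; ring
    rw [he, integral_const_mul, hv]; ring
  have hI1 : ∫ x, ((t * (x - m) : ℝ) : ℂ) * I ∂μX = 0 := by
    have hco : ∫ x, ((t * (x - m) : ℝ) : ℂ) ∂μX = ((∫ x, t * (x - m) ∂μX : ℝ) : ℂ) :=
      integral_ofReal
    rw [integral_mul_const, hco, hr1]
    simp
  have hI2 : ∫ x, (((t * (x - m))^2 : ℝ) : ℂ) / 2 ∂μX = ((σ^2 * t^2 / 2 : ℝ) : ℂ) := by
    have hco : ∫ x, (((t * (x - m))^2 : ℝ) : ℂ) ∂μX = ((∫ x, (t * (x - m))^2 ∂μX : ℝ) : ℂ) :=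
      integral_ofReal
    rw [integral_div, hco, hr2]
    norm_num
  have hgi1 : Integrable (fun x : ℝ => g x - 1) μX := hg_int.sub (integrable_const 1)
  have hgi2 : Integrable (fun x : ℝ => g x - 1 - ((t * (x - m) : ℝ) : ℂ) * I) μX := hgi1.sub h1
  have hgi3 : Integrable
      (fun x : ℝ => g x - 1 - ((t * (x - m) : ℝ) : ℂ) * I + (((t * (x - m))^2 : ℝ) : ℂ) / 2) μX :=
    hgi2.add h2
  -- third-order bound
  have hA : ‖(∫ x, g x ∂μX) - 1 + ((σ^2 * t^2 / 2 : ℝ) : ℂ)‖ ≤ κ * |t|^3 / 6 := by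
    have hid : (∫ x, g x ∂μX) - 1 + ((σ^2 * t^2 / 2 : ℝ) : ℂ)
        = ∫ x, (g x - 1 - ((t * (x - m) : ℝ) : ℂ) * I + (((t * (x - m))^2 : ℝ) : ℂ) / 2) ∂μX := by
      rw [integral_add hgi2 h2, integral_sub hgi1 h1,
        integral_sub hg_int (integrable_const 1), integral_const, hI1, hI2]
      simp
    have hval : ∫ x, |t * (x - m)|^3 / 6 ∂μX = κ * |t|^3 / 6 := by
      have he : (fun x : ℝ => |t * (x - m)|^3 / 6) = fun x => (|t|^3 / 6) * |x - m|^3 := by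
        funext x; rw [abs_mul, mul_pow]; ring
      rw [he, integral_const_mul, hκ]; ring
    rw [hid, ← hval]
    refine norm_integral_le_of_norm_le hu3_int (ae_of_all _ fun x => ?_)
    have h3 := exp3 (t * (x - m))
    have hee : g x - 1 - ((t * (x - m) : ℝ) : ℂ) * I + (((t * (x - m))^2 : ℝ) : ℂ) / 2
        = Complex.exp (((t * (x - m) : ℝ) : ℂ) * I)
          - (1 + ((t * (x - m) : ℝ) : ℂ) * I - ((t * (x - m) : ℝ) : ℂ)^2 / 2) := by
      rw [hg]; push_cast; ring
    rw [hee]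
    exact h3
  -- second-order bound
  have hB : ‖(∫ x, g x ∂μX) - 1‖ ≤ σ^2 * t^2 / 2 := by
    have hid : (∫ x, g x ∂μX) - 1
        = ∫ x, (g x - 1 - ((t * (x - m) : ℝ) : ℂ) * I) ∂μX := by
      rw [integral_sub hgi1 h1,
        integral_sub hg_int (integrable_const 1), integral_const, hI1]
      simp
    have hval : ∫ x, (t * (x - m))^2 / 2 ∂μX = σ^2 * t^2 / 2 := by
      rw [integral_div, hr2]
    rw [hid, ← hval]
    refine norm_integral_le_of_norm_le (hu2_int.div_const 2) (ae_of_all _ fun x => ?_)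
    have h2' := exp2 (t * (x - m))
    have hee : g x - 1 - ((t * (x - m) : ℝ) : ℂ) * I
        = Complex.exp (((t * (x - m) : ℝ) : ℂ) * I) - (1 + ((t * (x - m) : ℝ) : ℂ) * I) := by
      rw [hg]; ring
    rw [hee]
    exact h2'
  set r : ℂ := (∫ x, g x ∂μX) - 1 with hrdef
  have hhalf : σ^2 * t^2 / 2 ≤ 1/2 := by
    have h1' : |t| * σ ≤ 1 := by
      rw [← le_div_iff₀ hσ] at *
      exact ht
    have h2' : (|t| * σ) * (|t| * σ) ≤ 1 := by
      have := mul_le_mul h1' h1' (mul_nonneg (abs_nonneg t) hσ.le) zero_le_one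
      linarith
    nlinarith [_root_.sq_abs t, abs_nonneg t, h2']
  have hrlt : ‖r‖ < 1 := lt_of_le_of_lt (hB.trans hhalf) (by norm_num)
  have hlog2 : ‖Complex.log (1 + r) - r‖ ≤ ‖r‖^2 := by
    refine (Complex.norm_log_one_add_sub_self_le hrlt).trans ?_
    have hpos : (0:ℝ) < 1 - ‖r‖ := by linarith
    have hge : (1:ℝ)/2 ≤ 1 - ‖r‖ := by
      have := hB.trans hhalf; linarith
    have hinv : (1 - ‖r‖)⁻¹ ≤ 2 := by
      rw [inv_le_comm₀ hpos (by norm_num)]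
      linarith
    nlinarith [sq_nonneg ‖r‖, norm_nonneg r]
  have h1r : (∫ x, g x ∂μX) = 1 + r := by rw [hrdef]; ring
  rw [hψ]
  calc ‖Complex.log (∫ x, g x ∂μX) + ((σ^2 * t^2 / 2 : ℝ) : ℂ)‖
      = ‖(Complex.log (1 + r) - r) + (r + ((σ^2 * t^2 / 2 : ℝ) : ℂ))‖ := by
        rw [h1r]; ring_nf
    _ ≤ ‖Complex.log (1 + r) - r‖ + ‖r + ((σ^2 * t^2 / 2 : ℝ) : ℂ)‖ := norm_add_le _ _
    _ ≤ ‖r‖^2 + κ * |t|^3 / 6 := by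
        refine add_le_add hlog2 ?_
        rw [hrdef]
        exact hA
    _ ≤ (σ^2 * t^2 / 2)^2 + κ * |t|^3 / 6 := by
        nlinarith [norm_nonneg r, hB]
    _ = κ * |t|^3 / 6 + σ^4 * t^4 / 4 := by ring
end
end
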